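/- arXiv:1806.11347 — 9 statements merged into one kernel-verified Lean document; each statement's English description precedes it below -/
import Mathlib

section
/- Let ρ be a density matrix on ℂ^d and A, B Hermitian d×d complex matrices. Then ΔA² + ΔB² ≥ |Tr(ρ[A,B])|, where |·| is the complex modulus (the trace Tr(ρ[A,B]) is purely imaginary). -/
open Matrix Complex
open scoped ComplexOrder

lemma key_nonneg {d : ℕ} {ρ : Matrix (Fin d) (Fin d) ℂ} (hρ : ρ.PosSemidef)
    (M : Matrix (Fin d) (Fin d) ℂ) : 0 ≤ (ρ * (Mᴴ * M)).trace := by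
  obtain ⟨C, rfl⟩ : ∃ C : Matrix (Fin d) (Fin d) ℂ, ρ = Cᴴ * C := by
    open scoped MatrixOrder Matrix.Norms.L2Operator in
    exact CStarAlgebra.nonneg_iff_eq_star_mul_self.mp hρ.nonneg
  have h : (Cᴴ * C * (Mᴴ * M)).trace = ((M * Cᴴ)ᴴ * (M * Cᴴ)).trace := by
    calc (Cᴴ * C * (Mᴴ * M)).trace = (Cᴴ * (C * Mᴴ * M)).trace := by
          simp [Matrix.mul_assoc]
      _ = ((C * Mᴴ * M) * Cᴴ).trace := Matrix.trace_mul_comm _ _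
      _ = ((M * Cᴴ)ᴴ * (M * Cᴴ)).trace := by
          simp [Matrix.conjTranspose_mul, Matrix.mul_assoc]
  rw [h, Matrix.trace]
  refine Finset.sum_nonneg fun j _ => ?_
  simp only [Matrix.diag, Matrix.mul_apply, Matrix.conjTranspose_apply]
  exact Finset.sum_nonneg fun i _ => star_mul_self_nonneg _

lemma key_star {d : ℕ} {ρ : Matrix (Fin d) (Fin d) ℂ} (hρ : ρ.IsHermitian)
    (X : Matrix (Fin d) (Fin d) ℂ) : star (ρ * X).trace = (ρ * Xᴴ).trace := by
  rw [← Matrix.trace_conjTranspose, Matrix.conjTranspose_mul, hρ.eq,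
    Matrix.trace_mul_comm]

lemma key_ineq {d : ℕ} (ρ : Matrix (Fin d) (Fin d) ℂ)
    (hρ : ρ.PosSemidef) (hρtr : ρ.trace = 1)
    (A B : Matrix (Fin d) (Fin d) ℂ) (hA : A.IsHermitian) (hB : B.IsHermitian)
    (s : ℂ) (hs : star s = -s) (hs2 : s * s = -1) :
      0 ≤ (ρ * (A * A)).trace - (ρ * A).trace ^ 2
        + ((ρ * (B * B)).trace - (ρ * B).trace ^ 2)
        + s * ((ρ * (A * B)).trace - (ρ * (B * A)).trace) := by
  set a := (ρ * A).trace with ha_def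
  set b := (ρ * B).trace with hb_def
  have ha : star a = a := by rw [ha_def, key_star hρ.1, hA.eq]
  have hb : star b = b := by rw [hb_def, key_star hρ.1, hB.eq]
  have h := key_nonneg hρ ((A - a • 1) + s • (B - b • 1))
  have hMH : ((A - a • 1) + s • (B - b • 1))ᴴ
      = (A - a • 1) + (-s) • (B - b • 1) := by
    simp [Matrix.conjTranspose_add, Matrix.conjTranspose_sub,
      Matrix.conjTranspose_smul, hA.eq, hB.eq, ha, hb, hs]
  rw [hMH] at h
  refine le_of_le_of_eq h ?_
  simp only [Matrix.add_mul, Matrix.mul_add, Matrix.sub_mul, Matrix.mul_sub,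
    Matrix.smul_mul, Matrix.mul_smul, Matrix.one_mul, Matrix.mul_one,
    smul_sub, smul_smul, smul_add, Matrix.trace_add, Matrix.trace_sub,
    Matrix.trace_smul, hρtr, smul_eq_mul]
  linear_combination (b ^ 2 - (ρ * (B * B)).trace) * hs2

/-- Robertson-type sum uncertainty relation: for a density matrix `ρ` and
Hermitian `A B`, `ΔA² + ΔB² ≥ |Tr(ρ[A,B])|`. -/
theorem stmt2 {d : ℕ} (ρ : Matrix (Fin d) (Fin d) ℂ)
    (hρ : ρ.PosSemidef) (hρtr : ρ.trace = 1)
    (A B : Matrix (Fin d) (Fin d) ℂ) (hA : A.IsHermitian) (hB : B.IsHermitian) :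
    (((ρ * (A * A)).trace - (ρ * A).trace ^ 2).re
      + ((ρ * (B * B)).trace - (ρ * B).trace ^ 2).re)
      ≥ ‖(ρ * (A * B - B * A)).trace‖
    ∧ ((ρ * (A * B - B * A)).trace).re = 0 := by
  have htr : (ρ * (A * B - B * A)).trace
      = (ρ * (A * B)).trace - (ρ * (B * A)).trace := by
    rw [Matrix.mul_sub, Matrix.trace_sub]
  set t := (ρ * (A * B)).trace - (ρ * (B * A)).trace with ht_def
  have hts : star t = -t := by
    rw [ht_def, star_sub, key_star hρ.1, key_star hρ.1,
      Matrix.conjTranspose_mul, Matrix.conjTranspose_mul, hA.eq, hB.eq]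
    ring
  have htre : t.re = 0 := by
    have := congrArg Complex.re hts
    simp only [Complex.star_def, Complex.conj_re, Complex.neg_re] at this
    linarith
  have h1 := key_ineq ρ hρ hρtr A B hA hB Complex.I (by simp) (by simp)
  have h2 := key_ineq ρ hρ hρtr A B hA hB (-Complex.I) (by simp) (by simp)
  rw [Complex.le_def] at h1 h2
  have h1r := h1.1
  have h2r := h2.1
  simp only [Complex.add_re, Complex.sub_re, Complex.mul_re, Complex.I_re,
    Complex.I_im, Complex.neg_re, Complex.neg_im, Complex.zero_re] at h1r h2r
  have habs : ‖t‖ = |t.im| := by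
    rw [Complex.norm_def, Complex.normSq_apply, htre]
    rw [zero_mul, zero_add]
    exact Real.sqrt_mul_self_eq_abs _
  rw [← ht_def] at h1r h2r
  constructor
  · rw [htr, habs]
    simp only [Complex.sub_re]
    rcases abs_cases t.im with ⟨he, _⟩ | ⟨he, _⟩ <;> rw [he] <;> nlinarith
  · rw [htr]; exact htre
end

section
/- Let ρ be a density matrix on ℂ^d with positive semidefinite square root √ρ, and let A, B be Hermitian d×d complex matrices. Let M be any d×d complex matrix satisfying Tr(M†M) = 1 and Tr(M†·√ρ) = 0. Then for each sign s ∈ {+1, −1}: ΔA² + ΔB² + s·i·Tr(ρ[A,B]) ≥ |Tr(M†·(A + s·i·B)·√ρ)|². -/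
open Matrix Complex
open scoped ComplexOrder

lemma trace_CS {d : ℕ} (M N : Matrix (Fin d) (Fin d) ℂ) :
    ‖(Mᴴ * N).trace‖ ^ 2 ≤ ((Mᴴ * M).trace).re * ((Nᴴ * N).trace).re := by
  let f : Matrix (Fin d) (Fin d) ℂ → EuclideanSpace ℂ (Fin d × Fin d) :=
    fun X => WithLp.toLp 2 (fun p : Fin d × Fin d => X p.1 p.2)
  have hinner : ∀ X Y : Matrix (Fin d) (Fin d) ℂ, (inner ℂ (f X) (f Y) : ℂ) = (Xᴴ * Y).trace := by
    intro X Y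
    simp only [f, PiLp.inner_apply, PiLp.toLp_apply, RCLike.inner_apply, Matrix.trace, Matrix.mul_apply,
      Matrix.diag, Matrix.conjTranspose_apply, Fintype.sum_prod_type]
    rw [Finset.sum_comm]
    simp [mul_comm]
  have h1 := norm_inner_le_norm (𝕜 := ℂ) (f M) (f N)
  have h2 : ‖(Mᴴ * N).trace‖ ^ 2 ≤ (‖f M‖ * ‖f N‖)^2 := by
    rw [← hinner]
    exact pow_le_pow_left₀ (norm_nonneg _) h1 2
  calc ‖(Mᴴ * N).trace‖ ^ 2 ≤ (‖f M‖ * ‖f N‖)^2 := h2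
    _ = ‖f M‖^2 * ‖f N‖^2 := by ring
    _ = ((Mᴴ * M).trace).re * ((Nᴴ * N).trace).re := by
        rw [← hinner, ← hinner, ← inner_self_eq_norm_sq (𝕜 := ℂ), ← inner_self_eq_norm_sq (𝕜 := ℂ)]
        rfl

/-- mixed-state stronger uncertainty relation. For a density matrix `ρ` with
positive semidefinite square root `R` (`R * R = ρ`), Hermitian `A B`, and any matrix `M` with
`Tr(M†M) = 1` and `Tr(M† R) = 0`, for each sign `s = ±1`:
`ΔA² + ΔB² + s·i·Tr(ρ[A,B]) ≥ |Tr(M†(A + s·i·B)R)|²`. -/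
theorem stmt3 {d : ℕ} (ρ R : Matrix (Fin d) (Fin d) ℂ)
    (hρ : ρ.PosSemidef) (hρtr : ρ.trace = 1)
    (hR : R.PosSemidef) (hRsq : R * R = ρ)
    (A B : Matrix (Fin d) (Fin d) ℂ) (hA : A.IsHermitian) (hB : B.IsHermitian)
    (M : Matrix (Fin d) (Fin d) ℂ)
    (hM1 : (Mᴴ * M).trace = 1) (hM2 : (Mᴴ * R).trace = 0)
    (s : ℂ) (hs : s = 1 ∨ s = -1) :
    ((ρ * (A * A)).trace - (ρ * A).trace ^ 2).re
      + ((ρ * (B * B)).trace - (ρ * B).trace ^ 2).re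
      + (s * Complex.I * (ρ * (A * B - B * A)).trace).re
    ≥ ‖(Mᴴ * ((A + (s * Complex.I) • B) * R)).trace‖ ^ 2 := by
  have hss : s * s = 1 := by rcases hs with h|h <;> subst h <;> ring
  have hstars : star s = s := by rcases hs with h|h <;> subst h <;> simp
  have hstarsI : star (s * Complex.I) = -(s * Complex.I) := by
    rcases hs with h|h <;> subst h <;> simp [Complex.star_def, Complex.conj_I]
  set a := (ρ * A).trace with ha_def
  set b := (ρ * B).trace with hb_def
  have ha : star a = a := by
    rw [ha_def, ← Matrix.trace_conjTranspose, Matrix.conjTranspose_mul, hA.eq, hρ.1.eq,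
      Matrix.trace_mul_comm]
  have hb : star b = b := by
    rw [hb_def, ← Matrix.trace_conjTranspose, Matrix.conjTranspose_mul, hB.eq, hρ.1.eq,
      Matrix.trace_mul_comm]
  set C := A + (s * Complex.I) • B with hC_def
  set c := a + s * Complex.I * b with hc_def
  have htrC : (ρ * C).trace = c := by
    rw [hC_def, mul_add, Matrix.mul_smul, Matrix.trace_add, Matrix.trace_smul]
    simp [hc_def, smul_eq_mul]
    rfl
  have hCH : Cᴴ = A - (s * Complex.I) • B := by
    rw [hC_def, Matrix.conjTranspose_add, Matrix.conjTranspose_smul, hA.eq, hB.eq, hstarsI]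
    simp [sub_eq_add_neg]
  have hstarc : star c = a - s * Complex.I * b := by
    rw [hc_def]
    rw [star_add, star_mul', hstarsI, ha, hb]; ring
  have htrCH : (ρ * Cᴴ).trace = star c := by
    rw [hCH, mul_sub, Matrix.mul_smul, Matrix.trace_sub, Matrix.trace_smul, hstarc]
    simp [smul_eq_mul]
    rfl
  have hI2 : (Complex.I) ^ 2 = -1 := Complex.I_sq
  have hsI2 : (s * Complex.I) * (s * Complex.I) = -1 := by
    rw [mul_mul_mul_comm, hss, one_mul, Complex.I_mul_I]
  have hCC : Cᴴ * C = A * A + B * B + (s * Complex.I) • (A * B - B * A) := by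
    rw [hCH, hC_def]
    rw [Matrix.sub_mul, Matrix.mul_add, Matrix.mul_add]
    simp only [Matrix.smul_mul, Matrix.mul_smul, smul_smul, hsI2, neg_one_smul, smul_sub]
    abel
  have htrCC : (ρ * (Cᴴ * C)).trace
      = (ρ * (A * A)).trace + (ρ * (B * B)).trace
        + s * Complex.I * (ρ * (A * B - B * A)).trace := by
    rw [hCC, mul_add, mul_add, Matrix.mul_smul, Matrix.trace_add, Matrix.trace_add,
      Matrix.trace_smul]
    simp [smul_eq_mul]
  set v := (C - c • (1 : Matrix (Fin d) (Fin d) ℂ)) * R with hv_def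
  have hvtr : (Mᴴ * v).trace = (Mᴴ * (C * R)).trace := by
    rw [hv_def, Matrix.sub_mul, Matrix.smul_mul, one_mul, mul_sub, Matrix.mul_smul,
      Matrix.trace_sub, Matrix.trace_smul, hM2]
    simp
  -- compute (vᴴ * v).trace
  set X := Cᴴ - star c • (1 : Matrix (Fin d) (Fin d) ℂ) with hX_def
  set Y := C - c • (1 : Matrix (Fin d) (Fin d) ℂ) with hY_def
  have hvH : vᴴ = R * X := by
    rw [hv_def, Matrix.conjTranspose_mul, hR.1.eq, Matrix.conjTranspose_sub,
      Matrix.conjTranspose_smul, Matrix.conjTranspose_one, hX_def]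
  have htrvv : (vᴴ * v).trace = (ρ * (X * Y)).trace := by
    rw [hvH, hv_def]
    rw [show R * X * ((C - c • (1 : Matrix (Fin d) (Fin d) ℂ)) * R) = R * ((X * Y) * R) by
      rw [hY_def, Matrix.mul_assoc, Matrix.mul_assoc]]
    rw [Matrix.trace_mul_comm, Matrix.mul_assoc, hRsq, Matrix.trace_mul_comm]
  have hXY : X * Y = Cᴴ * C - c • Cᴴ - star c • C + (star c * c) • (1 : Matrix (Fin d) (Fin d) ℂ) := by
    rw [hX_def, hY_def]
    rw [Matrix.sub_mul, Matrix.mul_sub, Matrix.mul_sub, Matrix.smul_mul, Matrix.smul_mul,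
      Matrix.mul_smul, one_mul, Matrix.mul_smul, mul_one, smul_smul]
    simp only [Matrix.mul_one, Matrix.one_mul]
    abel
  have htrXY : (ρ * (X * Y)).trace
      = (ρ * (Cᴴ * C)).trace - c * (ρ * Cᴴ).trace - star c * (ρ * C).trace + (star c * c) := by
    rw [hXY, mul_add, mul_sub, mul_sub, Matrix.mul_smul, Matrix.mul_smul, Matrix.mul_smul,
      Matrix.trace_add, Matrix.trace_sub, Matrix.trace_sub, Matrix.trace_smul,
      Matrix.trace_smul, Matrix.trace_smul, mul_one, hρtr]
    simp [smul_eq_mul]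
  have hcc : c * star c = a ^ 2 + b ^ 2 := by
    rw [hc_def, hstarc]
    linear_combination (-Complex.I^2 * b^2) * hss + (-b^2) * hI2
  have hE : (vᴴ * v).trace
      = ((ρ * (A * A)).trace - a ^ 2) + ((ρ * (B * B)).trace - b ^ 2)
        + s * Complex.I * (ρ * (A * B - B * A)).trace := by
    rw [htrvv, htrXY, htrCC, htrC, htrCH]
    linear_combination -hcc
  have hCS := trace_CS M v
  rw [hM1, hvtr] at hCS
  simp only [Complex.one_re, one_mul] at hCS
  rw [ge_iff_le]
  calc ‖(Mᴴ * (C * R)).trace‖ ^ 2 ≤ ((vᴴ * v).trace).re := hCS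
    _ = _ := by rw [hE]; simp [Complex.add_re, Complex.sub_re]
end

section
/- Let ρ be a density matrix on ℂ^d and A, B Hermitian d×d complex matrices. Set C = A − Tr(ρA)·I, D = B − Tr(ρB)·I, and choose the sign s ∈ {+1, −1} such that s·i·Tr(ρ[A,B]) = −|Tr(ρ[A,B])|; let K = (C − s·i·D)(C + s·i·D). Then ΔA² + ΔB² ≥ |Tr(ρ[A,B])| + S(ρ) − ln Tr(exp(−K)), where exp denotes the matrix exponential (Tr exp(−K) is a positive real number since K is Hermitian). -/
open Matrix Complex
open scoped ComplexOrder

lemma gibbs_scalar {n : ℕ} (p h : Fin n → ℝ) (hp : ∀ i, 0 ≤ p i)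
    (hsum : ∑ i, p i = 1) (hZ : 0 < ∑ i, Real.exp (-(h i))) :
    -(∑ i, p i * Real.log (p i)) - Real.log (∑ i, Real.exp (-(h i))) ≤ ∑ i, p i * h i := by
  set Z := ∑ i, Real.exp (-(h i)) with hZdef
  have key : ∀ i : Fin n, -(p i * Real.log (p i)) ≤
      p i * h i + p i * Real.log Z + (Real.exp (-(h i)) / Z - p i) := by
    intro i
    rcases eq_or_lt_of_le (hp i) with h0 | h0
    · simp [← h0]
      positivity
    · set q := Real.exp (-(h i)) / Z with hq
      have hq0 : 0 < q := by positivity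
      have := Real.log_le_sub_one_of_pos (show 0 < q / p i by positivity)
      rw [Real.log_div hq0.ne' h0.ne'] at this
      have hlq : Real.log q = -(h i) - Real.log Z := by
        rw [hq, Real.log_div (Real.exp_pos _).ne' hZ.ne', Real.log_exp]
      rw [hlq] at this
      have h2 := mul_le_mul_of_nonneg_left this (hp i)
      have hne : p i ≠ 0 := h0.ne'
      have h3 : p i * (q / p i - 1) = q - p i := by field_simp
      nlinarith [h2]
  have step : -(∑ i, p i * Real.log (p i)) ≤ ∑ i, p i * h i + Real.log Z := by
    have e1 : -(∑ i, p i * Real.log (p i)) = ∑ i, -(p i * Real.log (p i)) := by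
      rw [Finset.sum_neg_distrib]
    rw [e1]
    have e2 : ∑ i, (p i * h i + p i * Real.log Z + (Real.exp (-(h i)) / Z - p i))
        = ∑ i, p i * h i + Real.log Z := by
      rw [Finset.sum_add_distrib, Finset.sum_add_distrib, ← Finset.sum_mul, hsum,
        Finset.sum_sub_distrib, ← Finset.sum_div, ← hZdef, div_self hZ.ne', hsum]
      ring
    calc ∑ i, -(p i * Real.log (p i))
        ≤ ∑ i, (p i * h i + p i * Real.log Z + (Real.exp (-(h i)) / Z - p i)) :=
          Finset.sum_le_sum fun i _ => key i
      _ = _ := e2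
  linarith



-- Jensen for exp
lemma exp_sum_le {n : ℕ} (w x : Fin n → ℝ) (hw : ∀ i, 0 ≤ w i) (hsum : ∑ i, w i = 1) :
    Real.exp (∑ i, w i * x i) ≤ ∑ i, w i * Real.exp (x i) := by
  have := convexOn_exp.map_sum_le (t := Finset.univ) (w := w) (p := x)
    (fun i _ => hw i) hsum (fun i _ => Set.mem_univ _)
  simpa [smul_eq_mul] using this



lemma exp_neg_spec {d : ℕ} (H : Matrix (Fin d) (Fin d) ℂ) (hH : H.IsHermitian) :
    NormedSpace.exp (-H) = (hH.eigenvectorUnitary : Matrix (Fin d) (Fin d) ℂ)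
      * diagonal (fun j => Complex.exp (-(hH.eigenvalues j)))
      * star (hH.eigenvectorUnitary : Matrix (Fin d) (Fin d) ℂ) := by
  set V : Matrix (Fin d) (Fin d) ℂ := (hH.eigenvectorUnitary : Matrix (Fin d) (Fin d) ℂ) with hV
  have hV1 : V * star V = 1 := mem_unitaryGroup_iff.mp hH.eigenvectorUnitary.2
  have hVinv : V⁻¹ = star V := Matrix.inv_eq_right_inv hV1
  have hVu : IsUnit V := (Matrix.isUnit_iff_isUnit_det V).mpr
    (IsUnit.of_mul_eq_one _ (by rw [← Matrix.det_mul, hV1, Matrix.det_one]))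
  have hfneg : (fun j => (↑(-(hH.eigenvalues j)) : ℂ))
      = (fun j => -(((RCLike.ofReal : ℝ → ℂ) ∘ hH.eigenvalues) j)) := by
    ext j; simp [Function.comp]
  have hnegH : -H = V * diagonal (fun j => (↑(-(hH.eigenvalues j)) : ℂ)) * V⁻¹ := by
    rw [hVinv, hfneg, ← Matrix.diagonal_neg]
    conv_lhs => rw [show H = V * diagonal ((RCLike.ofReal : ℝ → ℂ) ∘ hH.eigenvalues) * star V from hH.spectral_theorem]
    rw [Matrix.mul_neg, Matrix.neg_mul]
  rw [hnegH, Matrix.exp_conj V _ hVu, Matrix.exp_diagonal, hVinv]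
  have hexpfun : (NormedSpace.exp fun j => (↑(-(hH.eigenvalues j)) : ℂ))
      = fun j => Complex.exp (-(hH.eigenvalues j)) := by
    ext j
    rw [Pi.coe_exp, ← Complex.exp_eq_exp_ℂ]
    norm_num
  rw [hexpfun]

lemma trace_exp_neg {d : ℕ} (H : Matrix (Fin d) (Fin d) ℂ) (hH : H.IsHermitian) :
    ((NormedSpace.exp (-H)).trace).re = ∑ j, Real.exp (-(hH.eigenvalues j)) := by
  rw [exp_neg_spec H hH]
  set V : Matrix (Fin d) (Fin d) ℂ := (hH.eigenvectorUnitary : Matrix (Fin d) (Fin d) ℂ) with hV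
  have hV1 : star V * V = 1 := mem_unitaryGroup_iff'.mp hH.eigenvectorUnitary.2
  rw [Matrix.trace_mul_cycle, hV1, Matrix.one_mul, Matrix.trace_diagonal]
  rw [Complex.re_sum]
  congr 1; ext j
  rw [← Complex.ofReal_neg, ← Complex.ofReal_exp, Complex.ofReal_re]



lemma gibbs_core {d : ℕ} (hd : 0 < d) (ρ H : Matrix (Fin d) (Fin d) ℂ)
    (hρ : ρ.PosSemidef) (hρtr : ρ.trace = 1) (hH : H.IsHermitian) :
    -(∑ i, hρ.1.eigenvalues i * Real.log (hρ.1.eigenvalues i))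
      - Real.log (((NormedSpace.exp (-H)).trace).re) ≤ ((ρ * H).trace).re := by
  haveI : Nonempty (Fin d) := Fin.pos_iff_nonempty.mp hd
  set U : Matrix (Fin d) (Fin d) ℂ := (hρ.1.eigenvectorUnitary : Matrix (Fin d) (Fin d) ℂ) with hU
  set V : Matrix (Fin d) (Fin d) ℂ := (hH.eigenvectorUnitary : Matrix (Fin d) (Fin d) ℂ) with hV
  set p : Fin d → ℝ := hρ.1.eigenvalues with hp
  set μ : Fin d → ℝ := hH.eigenvalues with hμ
  have hU1 : U * star U = 1 := mem_unitaryGroup_iff.mp hρ.1.eigenvectorUnitary.2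
  have hU1' : star U * U = 1 := mem_unitaryGroup_iff'.mp hρ.1.eigenvectorUnitary.2
  have hV1 : V * star V = 1 := mem_unitaryGroup_iff.mp hH.eigenvectorUnitary.2
  have hV1' : star V * V = 1 := mem_unitaryGroup_iff'.mp hH.eigenvectorUnitary.2
  set W : Matrix (Fin d) (Fin d) ℂ := star V * U with hW
  -- unitarity of W
  have hW1 : star W * W = 1 := by
    rw [hW, Matrix.star_mul, star_star, Matrix.mul_assoc, ← Matrix.mul_assoc V, hV1,
      Matrix.one_mul, hU1']
  have hW1' : W * star W = 1 := by
    rw [hW, Matrix.star_mul, star_star, Matrix.mul_assoc, ← Matrix.mul_assoc U, hU1,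
      Matrix.one_mul, hV1']
  -- column sums of |W|²
  have hcol : ∀ i, ∑ j, Complex.normSq (W j i) = 1 := by
    intro i
    have h1 := congrFun (congrFun hW1 i) i
    rw [Matrix.mul_apply, Matrix.one_apply_eq] at h1
    have h2 : ∀ j, (star W) i j * W j i = ((Complex.normSq (W j i) : ℝ) : ℂ) := by
      intro j
      rw [Matrix.star_apply, Complex.star_def, mul_comm, Complex.mul_conj]
    rw [Finset.sum_congr rfl (fun j _ => h2 j)] at h1
    have := congrArg Complex.re h1
    rwa [Complex.re_sum, Complex.one_re,
      Finset.sum_congr rfl (fun j _ => Complex.ofReal_re _)] at this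
  have hrow : ∀ j, ∑ i, Complex.normSq (W j i) = 1 := by
    intro j
    have h1 := congrFun (congrFun hW1' j) j
    rw [Matrix.mul_apply, Matrix.one_apply_eq] at h1
    have h2 : ∀ i, W j i * (star W) i j = ((Complex.normSq (W j i) : ℝ) : ℂ) := by
      intro i
      rw [Matrix.star_apply, Complex.star_def, Complex.mul_conj]
    rw [Finset.sum_congr rfl (fun i _ => h2 i)] at h1
    have := congrArg Complex.re h1
    rwa [Complex.re_sum, Complex.one_re,
      Finset.sum_congr rfl (fun i _ => Complex.ofReal_re _)] at this
  -- spectral data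
  set Dμ : Matrix (Fin d) (Fin d) ℂ := diagonal ((RCLike.ofReal : ℝ → ℂ) ∘ μ) with hDμ
  set Dp : Matrix (Fin d) (Fin d) ℂ := diagonal ((RCLike.ofReal : ℝ → ℂ) ∘ p) with hDp
  have hspecρ : ρ = U * Dp * star U := hρ.1.spectral_theorem
  have hspecH : H = V * Dμ * star V := hH.spectral_theorem
  have eM : star U * H * U = star W * Dμ * W := by
    conv_lhs => rw [hspecH]
    simp only [hW, Matrix.star_mul, star_star, Matrix.mul_assoc]
  have htr1 : (ρ * H).trace = (star U * H * U * Dp).trace := by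
    conv_lhs => rw [hspecρ]
    rw [Matrix.mul_assoc (U * Dp) (star U) H, Matrix.trace_mul_comm, ← Matrix.mul_assoc]
  have htr2 : (star U * H * U * Dp).trace = ∑ i, (star W * Dμ * W) i i * ((p i : ℝ) : ℂ) := by
    rw [eM]
    simp [Matrix.trace, Matrix.diag, Matrix.mul_diagonal, hDp, Function.comp]
  have hentry : ∀ i, (star W * Dμ * W) i i
      = ∑ j, ((μ j * Complex.normSq (W j i) : ℝ) : ℂ) := by
    intro i
    rw [Matrix.mul_assoc, Matrix.mul_apply]
    refine Finset.sum_congr rfl fun j _ => ?_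
    rw [Matrix.star_apply, hDμ, Matrix.diagonal_mul, Complex.star_def]
    simp only [Function.comp_apply]
    rw [show ((RCLike.ofReal (μ j)) : ℂ) = ((μ j : ℝ) : ℂ) from rfl]
    push_cast
    rw [← Complex.mul_conj]
    ring
  have e4 : ∀ i, (star W * Dμ * W) i i * ((p i : ℝ) : ℂ)
      = ((p i * ∑ j, μ j * Complex.normSq (W j i) : ℝ) : ℂ) := by
    intro i
    rw [hentry i]
    push_cast
    ring
  have htrre : ((ρ * H).trace).re = ∑ i, p i * (∑ j, μ j * Complex.normSq (W j i)) := by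
    rw [htr1, htr2, Finset.sum_congr rfl (fun i _ => e4 i), Complex.re_sum]
    exact Finset.sum_congr rfl fun i _ => Complex.ofReal_re _
  have hpnn : ∀ i, 0 ≤ p i := fun i => hρ.eigenvalues_nonneg i
  have hpsum : ∑ i, p i = 1 := by
    have e : ρ.trace = ∑ i, ((p i : ℝ) : ℂ) := by
      conv_lhs => rw [hspecρ]
      rw [Matrix.trace_mul_cycle, hU1', Matrix.one_mul, hDp, Matrix.trace_diagonal]
      rfl
    rw [e] at hρtr
    have := congrArg Complex.re hρtr
    rwa [Complex.re_sum, Complex.one_re,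
      Finset.sum_congr rfl (fun i _ => Complex.ofReal_re _)] at this
  have hPeierls : ∑ i, Real.exp (-(∑ j, μ j * Complex.normSq (W j i)))
      ≤ ∑ j, Real.exp (-(μ j)) := by
    have step1 : ∀ i, Real.exp (-(∑ j, μ j * Complex.normSq (W j i)))
        ≤ ∑ j, Complex.normSq (W j i) * Real.exp (-(μ j)) := by
      intro i
      have e : -(∑ j, μ j * Complex.normSq (W j i))
          = ∑ j, Complex.normSq (W j i) * (-(μ j)) := by
        rw [← Finset.sum_neg_distrib]
        exact Finset.sum_congr rfl fun j _ => by ring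
      rw [e]
      exact exp_sum_le (fun j => Complex.normSq (W j i)) (fun j => -(μ j))
        (fun j => Complex.normSq_nonneg _) (hcol i)
    calc ∑ i, Real.exp (-(∑ j, μ j * Complex.normSq (W j i)))
        ≤ ∑ i, ∑ j, Complex.normSq (W j i) * Real.exp (-(μ j)) :=
          Finset.sum_le_sum fun i _ => step1 i
      _ = ∑ j, ∑ i, Complex.normSq (W j i) * Real.exp (-(μ j)) := Finset.sum_comm
      _ = ∑ j, Real.exp (-(μ j)) := by
          refine Finset.sum_congr rfl fun j _ => ?_
          rw [← Finset.sum_mul, hrow j, one_mul]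
  have hZpos : 0 < ∑ i, Real.exp (-(∑ j, μ j * Complex.normSq (W j i))) :=
    Finset.sum_pos (fun i _ => Real.exp_pos _) Finset.univ_nonempty
  have hgs := gibbs_scalar p (fun i => ∑ j, μ j * Complex.normSq (W j i)) hpnn hpsum hZpos
  have hlog := Real.log_le_log hZpos hPeierls
  rw [htrre, trace_exp_neg H hH]
  linarith


lemma trace_shift_sq {d : ℕ} (ρ X : Matrix (Fin d) (Fin d) ℂ) (htr : ρ.trace = 1) (x : ℂ)
    (hx : x = (ρ * X).trace) :
    (ρ * ((X - x • 1) * (X - x • 1))).trace = (ρ * (X * X)).trace - x ^ 2 := by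
  have e : (X - x • 1) * (X - x • 1)
      = X * X - x • X - x • X + (x * x) • (1 : Matrix (Fin d) (Fin d) ℂ) := by
    rw [Matrix.sub_mul, Matrix.mul_sub, Matrix.mul_sub, Matrix.smul_mul, Matrix.smul_mul,
      Matrix.mul_smul, Matrix.mul_smul, smul_smul, Matrix.mul_one, Matrix.one_mul]
    simp only [Matrix.one_mul, Matrix.mul_one]
    abel
  rw [e]
  simp only [Matrix.mul_add, Matrix.mul_sub, Matrix.mul_smul, Matrix.mul_one,
    Matrix.trace_add, Matrix.trace_sub, Matrix.trace_smul, htr, smul_eq_mul]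
  rw [← hx]
  ring

lemma shift_comm {d : ℕ} (A B : Matrix (Fin d) (Fin d) ℂ) (a b : ℂ) :
    (A - a • 1) * (B - b • 1) - (B - b • 1) * (A - a • 1) = A * B - B * A := by
  simp only [Matrix.sub_mul, Matrix.mul_sub, Matrix.smul_mul, Matrix.mul_smul,
    Matrix.mul_one, Matrix.one_mul, smul_smul, smul_sub]
  module


/-- optimization-free uncertainty relation.  With `K` the uncertainty matrix for
the sign `s` chosen so that `s·i·Tr(ρ[A,B]) = -|Tr(ρ[A,B])|`,
`ΔA² + ΔB² ≥ |Tr(ρ[A,B])| + S(ρ) - ln Tr(exp(-K))`, where `S(ρ) = -∑ λᵢ ln λᵢ` is the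
von Neumann entropy and `exp` the matrix exponential. -/
theorem stmt4 {d : ℕ} (ρ : Matrix (Fin d) (Fin d) ℂ)
    (hρ : ρ.PosSemidef) (hρtr : ρ.trace = 1)
    (A B : Matrix (Fin d) (Fin d) ℂ) (hA : A.IsHermitian) (hB : B.IsHermitian)
    (s : ℂ) (hs : s = 1 ∨ s = -1)
    (hsign : s * Complex.I * (ρ * (A * B - B * A)).trace
      = -(‖(ρ * (A * B - B * A)).trace‖ : ℂ))
    (C D K : Matrix (Fin d) (Fin d) ℂ)
    (hC : C = A - (ρ * A).trace • (1 : Matrix (Fin d) (Fin d) ℂ))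
    (hD : D = B - (ρ * B).trace • (1 : Matrix (Fin d) (Fin d) ℂ))
    (hK : K = (C - (s * Complex.I) • D) * (C + (s * Complex.I) • D)) :
    ((ρ * (A * A)).trace - (ρ * A).trace ^ 2).re
      + ((ρ * (B * B)).trace - (ρ * B).trace ^ 2).re
    ≥ ‖(ρ * (A * B - B * A)).trace‖
      + (-(∑ i, (hρ.1.eigenvalues i) * Real.log (hρ.1.eigenvalues i)))
      - Real.log (((NormedSpace.exp (-K)).trace).re) := by
  -- nontrivial dimension
  have hd : 0 < d := by
    rcases Nat.eq_zero_or_pos d with h | h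
    · exfalso; subst h; simp [Matrix.trace] at hρtr
    · exact h
  set a : ℂ := (ρ * A).trace with ha'
  set b : ℂ := (ρ * B).trace with hb'
  set c : ℂ := (ρ * (A * B - B * A)).trace with hc'
  -- realness of expectations
  have hareal : star a = a := by
    rw [ha', ← Matrix.trace_conjTranspose, Matrix.conjTranspose_mul, hA.eq, hρ.1.eq,
      Matrix.trace_mul_comm]
  have hbreal : star b = b := by
    rw [hb', ← Matrix.trace_conjTranspose, Matrix.conjTranspose_mul, hB.eq, hρ.1.eq,
      Matrix.trace_mul_comm]
  -- C, D Hermitian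
  have hCH : C.IsHermitian := by
    rw [hC]
    exact Matrix.IsHermitian.sub hA (by
      simp only [Matrix.IsHermitian, Matrix.conjTranspose_smul, Matrix.conjTranspose_one]
      rw [hareal])
  have hDH : D.IsHermitian := by
    rw [hD]
    exact Matrix.IsHermitian.sub hB (by
      simp only [Matrix.IsHermitian, Matrix.conjTranspose_smul, Matrix.conjTranspose_one]
      rw [hbreal])
  -- s is real, t = s*I satisfies star t = -t, t*t = -1
  have hstars : (starRingEnd ℂ) s = s := by rcases hs with h | h <;> simp [h]
  have hss : s * s = 1 := by rcases hs with h | h <;> simp [h]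
  have ht : star (s * Complex.I) = -(s * Complex.I) := by
    have e0 : star (s * Complex.I) = (starRingEnd ℂ) s * ((starRingEnd ℂ) Complex.I) := by
      rw [star_mul']; rfl
    rw [e0, hstars, Complex.conj_I]
    ring
  have ht2 : (s * Complex.I) * (s * Complex.I) = -1 := by
    calc (s * Complex.I) * (s * Complex.I) = (s * s) * (Complex.I * Complex.I) := by ring
      _ = -1 := by rw [hss, Complex.I_mul_I]; ring
  -- K is psd
  have hKN : K = (C + (s * Complex.I) • D)ᴴ * (C + (s * Complex.I) • D) := by
    rw [hK]
    congr 1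
    rw [Matrix.conjTranspose_add, Matrix.conjTranspose_smul, hCH.eq, hDH.eq, ht, neg_smul,
      ← sub_eq_add_neg]
  have hKpsd : K.PosSemidef := hKN ▸ Matrix.posSemidef_conjTranspose_mul_self _
  -- expand K
  have hKexp : K = C * C + (s * Complex.I) • (C * D) - (s * Complex.I) • (D * C) + D * D := by
    rw [hK]
    have e : (C - (s * Complex.I) • D) * (C + (s * Complex.I) • D)
        = C * C + (s * Complex.I) • (C * D) - (s * Complex.I) • (D * C)
          - ((s * Complex.I) * (s * Complex.I)) • (D * D) := by
      simp only [Matrix.sub_mul, Matrix.mul_add, Matrix.smul_mul, Matrix.mul_smul, smul_smul]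
      module
    rw [e, ht2, neg_one_smul]
    abel
  -- trace of ρ K
  have hCC : (ρ * (C * C)).trace = (ρ * (A * A)).trace - a ^ 2 := by
    rw [hC]; exact trace_shift_sq ρ A hρtr a ha'
  have hDD : (ρ * (D * D)).trace = (ρ * (B * B)).trace - b ^ 2 := by
    rw [hD]; exact trace_shift_sq ρ B hρtr b hb'
  have hcomm : C * D - D * C = A * B - B * A := by
    rw [hC, hD]; exact shift_comm A B a b
  have htrK : (ρ * K).trace
      = ((ρ * (A * A)).trace - a ^ 2) + ((ρ * (B * B)).trace - b ^ 2) - (↑‖c‖ : ℂ) := by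
    rw [hKexp]
    simp only [Matrix.mul_add, Matrix.mul_sub, Matrix.mul_smul, Matrix.trace_add,
      Matrix.trace_sub, Matrix.trace_smul, smul_eq_mul]
    have e2 : (s * Complex.I) * (ρ * (C * D)).trace - (s * Complex.I) * (ρ * (D * C)).trace
        = (s * Complex.I) * c := by
      rw [← mul_sub, ← Matrix.trace_sub, ← Matrix.mul_sub, hcomm, hc']
    have e3 : (s * Complex.I) * c = -(↑‖c‖ : ℂ) := hsign
    linear_combination hCC + hDD + e2 + e3
  -- real part
  have htrKre : ((ρ * K).trace).re
      = ((ρ * (A * A)).trace - a ^ 2).re + ((ρ * (B * B)).trace - b ^ 2).re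
        - ‖c‖ := by
    rw [htrK]
    simp [Complex.add_re, Complex.sub_re, Complex.ofReal_re]
  -- Gibbs
  have hg := gibbs_core hd ρ K hρ hρtr hKpsd.1
  rw [htrKre] at hg
  linarith
end

section
/- Let ψ, φ ∈ ℂ^d be unit vectors with |⟨φ, ψ⟩| < 1, and let A, B be Hermitian d×d complex matrices. Set C = A − ⟨ψ, Aψ⟩·I, D = B − ⟨ψ, Bψ⟩·I, choose the sign s ∈ {+1, −1} such that s·i·⟨ψ, [A,B]ψ⟩ = −|⟨ψ, [A,B]ψ⟩|, and let K = (C − s·i·D)(C + s·i·D). Assume K is positive definite with largest eigenvalue λmax and smallest eigenvalue λmin, and set α = √(λmax/λmin). Define θ ∈ (0, π/2] by cos θ = |⟨φ, ψ⟩|, and set Υ = 2·arctan(tan(θ/2)/α) (equivalently Υ = 2·arccot(α·cot(θ/2))). Assume cos Υ > 0. Then ΔA² + ΔB² ≥ |⟨ψ, [A,B]ψ⟩| + |⟨φ, Kψ⟩|² / (⟨φ, Kφ⟩ · cos Υ), where ΔA², ΔB² are the variances in the state ψ. -/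
open Matrix Complex Real
open scoped ComplexOrder

private lemma herm_symm' {d : ℕ} {K : Matrix (Fin d) (Fin d) ℂ} (hK : K.IsHermitian)
    (x y : Fin d → ℂ) :
    star x ⬝ᵥ K.mulVec y = starRingEnd ℂ (star y ⬝ᵥ K.mulVec x) := by
  have h : (starRingEnd ℂ) (star y ⬝ᵥ K *ᵥ x) = star (star y ⬝ᵥ K *ᵥ x) := rfl
  rw [h, ← star_dotProduct_star, star_star, star_mulVec, hK.eq, dotProduct_mulVec]

private lemma form_expand' {d : ℕ} {K : Matrix (Fin d) (Fin d) ℂ} (hK : K.IsHermitian)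
    (x y : Fin d → ℂ) (r t : ℝ) :
    (star ((r:ℂ) • x + (t:ℂ) • y) ⬝ᵥ K.mulVec ((r:ℂ) • x + (t:ℂ) • y)).re
      = r^2 * (star x ⬝ᵥ K.mulVec x).re + t^2 * (star y ⬝ᵥ K.mulVec y).re
        + 2*r*t*(star y ⬝ᵥ K.mulVec x).re := by
  have hxy := herm_symm' hK x y
  simp only [star_add, star_smul, mulVec_add, mulVec_smul, dotProduct_add, add_dotProduct,
    dotProduct_smul, smul_dotProduct, smul_eq_mul, star_trivial, RCLike.star_def,
    Complex.conj_ofReal]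
  rw [hxy]
  simp only [Complex.add_re, Complex.mul_re, Complex.ofReal_re, Complex.ofReal_im,
    Complex.conj_re, Complex.conj_im]
  ring

private lemma norm_expand' {d : ℕ} (x y : Fin d → ℂ) (r t : ℝ) :
    (star ((r:ℂ) • x + (t:ℂ) • y) ⬝ᵥ ((r:ℂ) • x + (t:ℂ) • y)).re
      = r^2 * (star x ⬝ᵥ x).re + t^2 * (star y ⬝ᵥ y).re + 2*r*t*(star y ⬝ᵥ x).re := by
  have h := form_expand' (K := (1 : Matrix (Fin d) (Fin d) ℂ)) Matrix.isHermitian_one x y r t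
  simpa only [Matrix.one_mulVec] using h

private lemma quad_eq' {d : ℕ} {K : Matrix (Fin d) (Fin d) ℂ} (hK : K.IsHermitian)
    (x : Fin d → ℂ) :
    ∃ y : Fin d → ℂ,
      (star x ⬝ᵥ K.mulVec x).re = ∑ i, hK.eigenvalues i * Complex.normSq (y i) ∧
      (star x ⬝ᵥ x).re = ∑ i, Complex.normSq (y i) := by
  classical
  set U : Matrix (Fin d) (Fin d) ℂ := (hK.eigenvectorUnitary : Matrix (Fin d) (Fin d) ℂ) with hU
  set Dg : Matrix (Fin d) (Fin d) ℂ := diagonal (RCLike.ofReal ∘ hK.eigenvalues) with hDg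
  set y : Fin d → ℂ := (star U).mulVec x with hydef
  have hy : star y = star x ᵥ* U := by
    rw [hydef, star_mulVec, ← star_eq_conjTranspose, star_star]
  refine ⟨y, ?_, ?_⟩
  · have h1 : star x ⬝ᵥ K.mulVec x = star y ⬝ᵥ Dg.mulVec y := by
      calc star x ⬝ᵥ K.mulVec x
          = star x ⬝ᵥ (U * (Dg * star U)).mulVec x := by
            rw [← mul_assoc]; conv_lhs => rw [hK.spectral_theorem, Unitary.conjStarAlgAut_apply]
        _ = (star x ᵥ* U) ⬝ᵥ (Dg * star U).mulVec x := by
            rw [← mulVec_mulVec, dotProduct_mulVec]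
        _ = star y ⬝ᵥ Dg.mulVec y := by
            rw [hy, ← mulVec_mulVec]
    rw [h1, dotProduct, Complex.re_sum]
    refine Finset.sum_congr rfl fun i _ => ?_
    rw [hDg, mulVec_diagonal]
    simp only [Pi.star_apply, Function.comp_apply, RCLike.star_def]
    have hcast : (RCLike.ofReal (hK.eigenvalues i) : ℂ) = Complex.ofReal (hK.eigenvalues i) := rfl
    rw [hcast]
    rw [show (starRingEnd ℂ) (y i) * ((hK.eigenvalues i : ℂ) * y i)
        = (hK.eigenvalues i : ℂ) * ((starRingEnd ℂ) (y i) * y i) by ring,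
      ← Complex.normSq_eq_conj_mul_self, ← Complex.ofReal_mul, Complex.ofReal_re]
  · have h2 : star x ⬝ᵥ x = star y ⬝ᵥ y := by
      rw [hy, hydef, ← dotProduct_mulVec, mulVec_mulVec,
        (Matrix.mem_unitaryGroup_iff).mp hK.eigenvectorUnitary.2, one_mulVec]
    rw [h2, dotProduct, Complex.re_sum]
    refine Finset.sum_congr rfl fun i _ => ?_
    simp only [Pi.star_apply, RCLike.star_def]
    rw [← Complex.normSq_eq_conj_mul_self, Complex.ofReal_re]

private lemma quad_bounds' {d : ℕ} {K : Matrix (Fin d) (Fin d) ℂ} (hK : K.IsHermitian)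
    {lo hi : ℝ} (hlo : ∀ i, lo ≤ hK.eigenvalues i) (hhi : ∀ i, hK.eigenvalues i ≤ hi)
    (x : Fin d → ℂ) :
    lo * (star x ⬝ᵥ x).re ≤ (star x ⬝ᵥ K.mulVec x).re ∧
      (star x ⬝ᵥ K.mulVec x).re ≤ hi * (star x ⬝ᵥ x).re := by
  obtain ⟨y, h1, h2⟩ := quad_eq' hK x
  rw [h1, h2, Finset.mul_sum, Finset.mul_sum]
  constructor
  · exact Finset.sum_le_sum fun i _ =>
      mul_le_mul_of_nonneg_right (hlo i) (Complex.normSq_nonneg _)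
  · exact Finset.sum_le_sum fun i _ =>
      mul_le_mul_of_nonneg_right (hhi i) (Complex.normSq_nonneg _)

private lemma mul_conj_expand' {d : ℕ} (M N : Matrix (Fin d) (Fin d) ℂ) (z : ℂ)
    (hz : z * z = -1) :
    (M - z•N) * (M + z•N) = M*M + N*N + z•(M*N - N*M) := by
  simp only [Matrix.sub_mul, Matrix.mul_add, Matrix.smul_mul, Matrix.mul_smul, smul_smul, hz,
    smul_sub, neg_one_smul, smul_add]
  abel

private lemma comm_center' {d : ℕ} (A B : Matrix (Fin d) (Fin d) ℂ) (ca cb : ℂ) :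
    (A - ca • (1 : Matrix (Fin d) (Fin d) ℂ)) * (B - cb • 1) - (B - cb•1) * (A - ca•1)
      = A*B - B*A := by
  simp only [Matrix.sub_mul, Matrix.mul_sub, Matrix.smul_mul, Matrix.mul_smul, smul_smul,
    Matrix.one_mul, Matrix.mul_one, smul_sub, sub_smul, mul_comm]
  module

private lemma sq_center' {d : ℕ} (A : Matrix (Fin d) (Fin d) ℂ) (ca : ℂ) :
    (A - ca • (1 : Matrix (Fin d) (Fin d) ℂ)) * (A - ca • 1)
      = A*A - (2*ca) • A + (ca*ca) • 1 := by
  simp only [Matrix.sub_mul, Matrix.mul_sub, Matrix.smul_mul, Matrix.mul_smul, smul_smul,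
    Matrix.one_mul, Matrix.mul_one, smul_sub, sub_smul]
  module

private lemma tan_half_sq' (θ : ℝ) (h1 : 0 < θ) (h2 : θ ≤ π/2) :
    Real.tan (θ/2) ^ 2 * (1 + Real.cos θ) = 1 - Real.cos θ ∧ 0 < Real.tan (θ/2) := by
  have hpi := Real.pi_pos
  have hc : 0 < Real.cos (θ/2) := by
    apply Real.cos_pos_of_mem_Ioo
    constructor <;> [nlinarith; nlinarith]
  have hs : 0 < Real.sin (θ/2) := by
    apply Real.sin_pos_of_pos_of_lt_pi <;> nlinarith
  have hcos2 : Real.cos θ = 2 * Real.cos (θ/2)^2 - 1 := by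
    have := Real.cos_two_mul (θ/2)
    rw [show 2 * (θ/2) = θ by ring] at this
    linarith
  have hpyth := Real.sin_sq_add_cos_sq (θ/2)
  constructor
  · rw [Real.tan_eq_sin_div_cos, hcos2]
    field_simp
    nlinarith
  · apply Real.tan_pos_of_pos_of_lt_pi_div_two <;> nlinarith

private lemma cos_two_arctan' (t a : ℝ) (ha : 0 < a) :
    Real.cos (2 * Real.arctan (t / a)) * (a^2 + t^2) = a^2 - t^2 := by
  set x := t / a with hx
  have h1 : 0 < 1 + x^2 := by positivity
  have hsq : Real.sqrt (1 + x^2) ^ 2 = 1 + x^2 := Real.sq_sqrt h1.le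
  have key : Real.cos (2*Real.arctan x) = (1 - x^2)/(1+x^2) := by
    rw [Real.cos_two_mul, Real.cos_arctan, div_pow, one_pow, hsq]
    field_simp
    ring
  rw [key, hx]
  field_simp

set_option maxHeartbeats 1000000 in
/-- even stronger uncertainty relation for pure states, based on the
Bauer–Householder inequality.  With `K` the uncertainty matrix (sign chosen so that
`s·i·⟨ψ,[A,B]ψ⟩ = -|⟨ψ,[A,B]ψ⟩|`), `K` positive definite with extreme eigenvalues
`λmax, λmin`, `α = √(λmax/λmin)`, `cos θ = |⟨φ,ψ⟩|` with `θ ∈ (0, π/2]`, and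
`Υ = 2·arctan(tan(θ/2)/α)` with `cos Υ > 0`:
`ΔA² + ΔB² ≥ |⟨ψ,[A,B]ψ⟩| + |⟨φ,Kψ⟩|²/(⟨φ,Kφ⟩·cos Υ)`. -/
theorem stmt5 {d : ℕ} (ψ φ : Fin d → ℂ)
    (hψ : star ψ ⬝ᵥ ψ = 1) (hφ : star φ ⬝ᵥ φ = 1)
    (hover : ‖star φ ⬝ᵥ ψ‖ < 1)
    (A B : Matrix (Fin d) (Fin d) ℂ) (hA : A.IsHermitian) (hB : B.IsHermitian)
    (s : ℂ) (hs : s = 1 ∨ s = -1)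
    (hsign : s * Complex.I * (star ψ ⬝ᵥ (A * B - B * A).mulVec ψ)
      = -(‖star ψ ⬝ᵥ (A * B - B * A).mulVec ψ‖ : ℂ))
    (C D K : Matrix (Fin d) (Fin d) ℂ)
    (hC : C = A - (star ψ ⬝ᵥ A.mulVec ψ) • (1 : Matrix (Fin d) (Fin d) ℂ))
    (hD : D = B - (star ψ ⬝ᵥ B.mulVec ψ) • (1 : Matrix (Fin d) (Fin d) ℂ))
    (hK : K = (C - (s * Complex.I) • D) * (C + (s * Complex.I) • D))
    (hKpd : K.PosDef)
    (lmax lmin : ℝ)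
    (hmax : IsGreatest (Set.range hKpd.1.eigenvalues) lmax)
    (hmin : IsLeast (Set.range hKpd.1.eigenvalues) lmin)
    (α : ℝ) (hα : α = Real.sqrt (lmax / lmin))
    (θ : ℝ) (hθ : θ ∈ Set.Ioc 0 (Real.pi / 2))
    (hcos : Real.cos θ = ‖star φ ⬝ᵥ ψ‖)
    (Υ : ℝ) (hΥdef : Υ = 2 * Real.arctan (Real.tan (θ / 2) / α))
    (hΥ : Real.cos Υ > 0) :
    ((star ψ ⬝ᵥ (A * A).mulVec ψ - (star ψ ⬝ᵥ A.mulVec ψ) ^ 2).re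
      + (star ψ ⬝ᵥ (B * B).mulVec ψ - (star ψ ⬝ᵥ B.mulVec ψ) ^ 2).re)
    ≥ ‖star ψ ⬝ᵥ (A * B - B * A).mulVec ψ‖
      + ‖star φ ⬝ᵥ K.mulVec ψ‖ ^ 2
          / ((star φ ⬝ᵥ K.mulVec φ).re * Real.cos Υ) := by
  obtain ⟨hθ1, hθ2⟩ := hθ
  -- scalar abbreviations
  set ca := star ψ ⬝ᵥ A.mulVec ψ with hca
  set cb := star ψ ⬝ᵥ B.mulVec ψ with hcb
  set cm := star ψ ⬝ᵥ (A * B - B * A).mulVec ψ with hcm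
  -- (s·i)² = -1
  have hz : (s * Complex.I) * (s * Complex.I) = -1 := by
    rcases hs with rfl | rfl <;> ring_nf <;> simp [Complex.I_sq]
  -- expansion of K
  have hKexp : K = A*A - (2*ca) • A + (ca*ca) • 1
      + (B*B - (2*cb) • B + (cb*cb) • 1) + (s*Complex.I) • (A*B - B*A) := by
    rw [hK, hC, hD, mul_conj_expand' _ _ _ hz, sq_center', sq_center', comm_center']
  -- quadratic form of K at ψ
  have hforms : star ψ ⬝ᵥ K.mulVec ψ
      = (star ψ ⬝ᵥ (A*A).mulVec ψ - ca^2) + (star ψ ⬝ᵥ (B*B).mulVec ψ - cb^2)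
        - (‖cm‖ : ℂ) := by
    rw [hKexp]
    simp only [Matrix.add_mulVec, Matrix.sub_mulVec, Matrix.smul_mulVec, Matrix.one_mulVec,
      dotProduct_add, dotProduct_sub, dotProduct_smul, smul_eq_mul, hψ, mul_one]
    have hcm' : star ψ ⬝ᵥ (A*B).mulVec ψ - star ψ ⬝ᵥ (B*A).mulVec ψ = cm := by
      rw [hcm, Matrix.sub_mulVec, dotProduct_sub]
    linear_combination hsign + 2*ca*hca + 2*cb*hcb + (s*Complex.I)*hcm'
  set a := (star ψ ⬝ᵥ K.mulVec ψ).re with haa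
  set b := (star φ ⬝ᵥ K.mulVec φ).re with hbb
  set Q := ‖star φ ⬝ᵥ K.mulVec ψ‖ with hQ
  have hare : (star ψ ⬝ᵥ (A*A).mulVec ψ - ca^2).re + (star ψ ⬝ᵥ (B*B).mulVec ψ - cb^2).re
      = a + ‖cm‖ := by
    rw [haa, hforms]
    simp [Complex.add_re, Complex.sub_re, Complex.ofReal_re]
  rw [hare]
  -- main claim: Q^2 / (b * cos Υ) ≤ a
  have hψne : ψ ≠ 0 := by
    intro h; rw [h] at hψ; simp at hψ
  have hφne : φ ≠ 0 := by
    intro h; rw [h] at hφ; simp at hφ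
  have ha : 0 < a := by
    have := hKpd.re_dotProduct_pos hψne
    simpa using this
  have hb : 0 < b := by
    have := hKpd.re_dotProduct_pos hφne
    simpa using this
  have hlo : ∀ i, lmin ≤ hKpd.1.eigenvalues i := fun i => hmin.2 ⟨i, rfl⟩
  have hhi : ∀ i, hKpd.1.eigenvalues i ≤ lmax := fun i => hmax.2 ⟨i, rfl⟩
  have hlmin : 0 < lmin := by
    obtain ⟨i, hi⟩ := hmin.1
    rw [← hi]; exact hKpd.eigenvalues_pos i
  have hlmax : 0 < lmax := by
    obtain ⟨i, hi⟩ := hmax.1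
    rw [← hi]; exact hKpd.eigenvalues_pos i
  have hQ0 : 0 ≤ Q := norm_nonneg _
  have hKH : K.IsHermitian := hKpd.1
  have hmain : Q^2 / (b * Real.cos Υ) ≤ a := by
    by_cases hg : (star φ ⬝ᵥ K.mulVec ψ) = 0
    · rw [hQ, hg]
      simp only [norm_zero, map_zero, ne_eq, OfNat.ofNat_ne_zero, not_false_eq_true, zero_pow, zero_div]
      exact ha.le
    · set g := star φ ⬝ᵥ K.mulVec ψ with hgdef
      have hQpos : 0 < Q := by rw [hQ]; exact norm_pos_iff.mpr hg
      have hQne : (Q:ℂ) ≠ 0 := by exact_mod_cast hQpos.ne'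
      set u : ℂ := g / (Q : ℂ) with hu
      have hgg : (starRingEnd ℂ) g * g = ((Q^2 : ℝ) : ℂ) := by
        rw [← Complex.normSq_eq_conj_mul_self, hQ]
        norm_cast
        rw [Complex.sq_norm]
      have hgu : (starRingEnd ℂ) u * g = (Q:ℂ) := by
        rw [hu, map_div₀, Complex.conj_ofReal, div_mul_eq_mul_div, hgg,
          Complex.ofReal_pow, sq, mul_div_assoc, div_self hQne, mul_one]
      have hnormu : (starRingEnd ℂ) u * u = 1 := by
        rw [hu, map_div₀, Complex.conj_ofReal, div_mul_div_comm, hgg]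
        push_cast
        field_simp
      set φ' := u • φ with hφ'def
      have hstar : star φ' = (starRingEnd ℂ) u • star φ := by
        rw [hφ'def, star_smul]; rfl
      have h1 : star φ' ⬝ᵥ K.mulVec ψ = (Q:ℂ) := by
        rw [hstar, smul_dotProduct, smul_eq_mul, ← hgdef, hgu]
      have h2 : star φ' ⬝ᵥ K.mulVec φ' = star φ ⬝ᵥ K.mulVec φ := by
        rw [hstar, hφ'def, smul_dotProduct, mulVec_smul, dotProduct_smul,
          smul_eq_mul, smul_eq_mul, ← mul_assoc, hnormu, one_mul]
      have h3 : star φ' ⬝ᵥ φ' = 1 := by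
        rw [hstar, hφ'def, smul_dotProduct, dotProduct_smul, smul_eq_mul, smul_eq_mul,
          ← mul_assoc, hnormu, one_mul, hφ]
      have hc_le : (star φ' ⬝ᵥ ψ).re ≤ Real.cos θ := by
        rw [hstar, smul_dotProduct, smul_eq_mul]
        calc ((starRingEnd ℂ) u * (star φ ⬝ᵥ ψ)).re
            ≤ ‖(starRingEnd ℂ) u * (star φ ⬝ᵥ ψ)‖ := Complex.re_le_norm _
          _ = ‖u‖ * ‖star φ ⬝ᵥ ψ‖ := by
              rw [norm_mul, Complex.norm_conj]
          _ = Real.cos θ := by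
              have habsu : ‖u‖ = 1 := by
                rw [hu, norm_div, Complex.norm_real, Real.norm_eq_abs, abs_of_pos hQpos, hQ]
                field_simp
              rw [habsu, one_mul, hcos]
      set c := (star φ' ⬝ᵥ ψ).re with hcdef
      -- scaling
      set ρ := Real.sqrt (b/a) with hρdef
      have hρ : 0 < ρ := Real.sqrt_pos.2 (by positivity)
      set r := Real.sqrt ρ with hrdef
      have hr : 0 < r := Real.sqrt_pos.2 hρ
      have hr2 : r^2 = ρ := Real.sq_sqrt hρ.le
      have hrinv2 : (r⁻¹)^2 = ρ⁻¹ := by rw [inv_pow, hr2]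
      have hrr : r * r⁻¹ = 1 := mul_inv_cancel₀ hr.ne'
      set p := Real.sqrt (a*b) with hpdef
      have hp : 0 < p := Real.sqrt_pos.2 (by positivity)
      have hp2 : p^2 = a*b := Real.sq_sqrt (by positivity)
      have hpa : ρ * a = p := by
        have hdiv : (b/a) * a^2 = a*b := by field_simp
        calc ρ * a = Real.sqrt (b/a) * Real.sqrt (a^2) := by
              rw [Real.sqrt_sq ha.le, hρdef]
          _ = Real.sqrt ((b/a) * a^2) := (Real.sqrt_mul (by positivity) _).symm
          _ = p := by rw [hdiv, hpdef]
      have hpb : ρ⁻¹ * b = p := by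
        have hinv : ρ⁻¹ = Real.sqrt (a/b) := by
          rw [hρdef, ← Real.sqrt_inv, inv_div]
        have hdiv : (a/b) * b^2 = a*b := by field_simp
        calc ρ⁻¹ * b = Real.sqrt (a/b) * Real.sqrt (b^2) := by
              rw [Real.sqrt_sq hb.le, hinv]
          _ = Real.sqrt ((a/b) * b^2) := (Real.sqrt_mul (by positivity) _).symm
          _ = p := by rw [hdiv, hpdef]
      set S := ρ + ρ⁻¹ with hSdef
      have hS : 2 ≤ S := by
        have h2' : 0 ≤ ρ*ρ - 2*ρ + 1 := by linarith [sq_nonneg (ρ - 1)]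
        have hkey : ρ + ρ⁻¹ - 2 = (ρ*ρ - 2*ρ + 1) * ρ⁻¹ := by
          field_simp; ring
        have := mul_nonneg h2' (inv_nonneg.2 hρ.le)
        rw [hSdef]; linarith [hkey ▸ this]
      -- expansions
      have hQre : (star φ' ⬝ᵥ K.mulVec ψ).re = Q := by rw [h1, Complex.ofReal_re]
      have hbre : (star φ' ⬝ᵥ K.mulVec φ').re = b := by rw [h2, hbb]
      have h1re : (star ψ ⬝ᵥ ψ).re = 1 := by rw [hψ, Complex.one_re]
      have h3re : (star φ' ⬝ᵥ φ').re = 1 := by rw [h3, Complex.one_re]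
      have hsym := herm_symm' hKH ψ φ'
      have hQre' : (star ψ ⬝ᵥ K.mulVec φ').re = Q := by
        rw [hsym, Complex.conj_re]
        exact hQre
      have hFp := form_expand' hKH ψ φ' r (r⁻¹)
      have hFm := form_expand' hKH ψ φ' r (-r⁻¹)
      have hNp := norm_expand' ψ φ' r (r⁻¹)
      have hNm := norm_expand' ψ φ' r (-r⁻¹)
      rw [hQre, hbre, ← haa] at hFp hFm
      rw [h1re, h3re] at hNp hNm
      have hup := (quad_bounds' hKH hlo hhi ((r:ℂ) • ψ + (((r⁻¹ : ℝ)):ℂ) • φ')).2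
      have hlow := (quad_bounds' hKH hlo hhi ((r:ℂ) • ψ + (((-r⁻¹ : ℝ)):ℂ) • φ')).1
      rw [hFp, hNp] at hup
      rw [hFm, hNm] at hlow
      -- now hup : r^2*a + (r⁻¹)^2*b + 2*r*r⁻¹*Q ≤ lmax*(r^2*1 + (r⁻¹)^2*1 + 2*r*r⁻¹*c)
      rw [hr2] at hup hlow
      rw [hrinv2] at hup
      rw [neg_sq, hrinv2] at hlow
      have hFpv : ρ*a + ρ⁻¹*b + 2*(r*r⁻¹)*Q ≤ lmax*(ρ + ρ⁻¹ + 2*(r*r⁻¹)*c) := by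
        calc ρ*a + ρ⁻¹*b + 2*(r*r⁻¹)*Q = ρ*a + ρ⁻¹*b + 2*r*r⁻¹*Q := by ring
          _ ≤ lmax * (ρ*1 + ρ⁻¹*1 + 2*r*r⁻¹*c) := hup
          _ = lmax*(ρ + ρ⁻¹ + 2*(r*r⁻¹)*c) := by ring
      have hFmv : lmin*(ρ + ρ⁻¹ - 2*(r*r⁻¹)*c) ≤ ρ*a + ρ⁻¹*b - 2*(r*r⁻¹)*Q := by
        calc lmin*(ρ + ρ⁻¹ - 2*(r*r⁻¹)*c)
            = lmin * (ρ*1 + ρ⁻¹*1 + 2*r*(-r⁻¹)*c) := by ring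
          _ ≤ ρ*a + (ρ⁻¹)*b + 2*r*(-r⁻¹)*Q := hlow
          _ = ρ*a + ρ⁻¹*b - 2*(r*r⁻¹)*Q := by ring
      rw [hrr] at hFpv hFmv
      rw [hpa, hpb, ← hSdef] at hFpv hFmv
      -- hFpv : p + p + 2*1*Q ≤ lmax*(S + 2*1*c), hFmv : lmin*(S - 2*1*c) ≤ p + p - 2*1*Q
      -- trigonometry
      obtain ⟨ht, htpos⟩ := tan_half_sq' θ hθ1 hθ2
      set t := Real.tan (θ/2) with htdef
      clear_value t S p r ρ c φ' u g Q b a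
      have hk0 : 0 ≤ Real.cos θ := by rw [hcos]; exact norm_nonneg _
      have hα2 : α^2 = lmax/lmin := by
        rw [hα]; exact Real.sq_sqrt (by positivity)
      have hαpos : 0 < α := by
        rw [hα]; exact Real.sqrt_pos.2 (by positivity)
      have hcosY : Real.cos Υ * (α^2 + t^2) = α^2 - t^2 := by
        rw [hΥdef]; exact cos_two_arctan' t α hαpos
      have key1 : t^2*(S + 2*c) ≤ S - 2*c := by
        set k := Real.cos θ with hkdef
        have hk1 : (0:ℝ) < 1 + k := by linarith
        have h8 : 0 ≤ k*(S-2) := mul_nonneg hk0 (by linarith)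
        have h9 : (1-k)*(S+2*c) ≤ (1+k)*(S-2*c) := by linarith [h8, hc_le]
        have h10 : t^2*(S+2*c)*(1+k) = (1-k)*(S+2*c) := by
          linear_combination (S+2*c) * ht
        have h11 : t^2*(S+2*c)*(1+k) ≤ (S-2*c)*(1+k) := by
          rw [h10]; linarith [h9]
        exact le_of_mul_le_mul_right h11 hk1
      have hA1 : t^2*(2*p + 2*Q) ≤ t^2*(lmax*(S + 2*c)) := by
        apply mul_le_mul_of_nonneg_left _ (sq_nonneg t)
        linarith [hFpv]
      have hA2 : t^2*(lmax*(S + 2*c)) ≤ lmax*(S - 2*c) := by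
        have := mul_le_mul_of_nonneg_left key1 hlmax.le
        linarith [this]
      have hA3 : lmax*(S - 2*c) = α^2*(lmin*(S - 2*c)) := by
        rw [hα2]
        field_simp
      have hA4 : α^2*(lmin*(S - 2*c)) ≤ α^2*(2*p - 2*Q) := by
        apply mul_le_mul_of_nonneg_left _ (sq_nonneg α)
        linarith [hFmv]
      have hA5 : Q*(α^2 + t^2) ≤ p*(α^2 - t^2) := by
        linarith [hA1, hA2, hA3, hA4]
      have hpos2 : 0 < α^2 + t^2 := by positivity
      have hQp : Q ≤ p * Real.cos Υ := by
        have h6 : Q*(α^2+t^2) ≤ p*Real.cos Υ*(α^2+t^2) := by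
          rw [mul_assoc, hcosY]; exact hA5
        exact (mul_le_mul_iff_of_pos_right hpos2).mp h6
      have hQ2 : Q^2 ≤ (p*Real.cos Υ)^2 := pow_le_pow_left₀ hQ0 hQp 2
      rw [div_le_iff₀ (by positivity : (0:ℝ) < b * Real.cos Υ)]
      have e1 : (p*Real.cos Υ)^2 = (a*b)*(Real.cos Υ*Real.cos Υ) := by
        rw [mul_pow, hp2]; ring
      have e2 : (a*b)*(Real.cos Υ*Real.cos Υ) ≤ (a*b)*(Real.cos Υ*1) := by
        apply mul_le_mul_of_nonneg_left _ (mul_nonneg ha.le hb.le)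
        exact mul_le_mul_of_nonneg_left (Real.cos_le_one Υ) hΥ.le
      rw [e1] at hQ2
      linarith [hQ2, e2]
  linarith [hmain]
end

section
/- Let ρ be a density matrix on ℂ^d and A, B Hermitian d×d complex matrices, not both scalar multiples of the identity in the sense that K ≠ 0, where K = (C − s·i·D)(C + s·i·D) with C = A − Tr(ρA)·I, D = B − Tr(ρB)·I and the sign s ∈ {+1, −1} chosen such that s·i·Tr(ρ[A,B]) = −|Tr(ρ[A,B])|. Set λ = Tr(K) (a positive real) and σ = K/λ, which is a density matrix. Then ΔA² + ΔB² ≤ |Tr(ρ[A,B])| + λ·F(ρ, σ)². -/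
open Matrix Complex
open scoped ComplexOrder Classical

lemma trace_eq_sum_eig {d : ℕ} {A : Matrix (Fin d) (Fin d) ℂ} (hA : A.IsHermitian) :
    A.trace = ∑ i, (hA.eigenvalues i : ℂ) := by
  conv_lhs => rw [hA.spectral_theorem, Unitary.conjStarAlgAut_apply]
  rw [Matrix.trace_mul_comm, ← Matrix.mul_assoc,
    (Matrix.mem_unitaryGroup_iff').mp (hA.eigenvectorUnitary).2, Matrix.one_mul,
    Matrix.trace_diagonal]
  rfl

lemma sq_trace_eq_sum_eig {d : ℕ} {A : Matrix (Fin d) (Fin d) ℂ} (hA : A.IsHermitian) :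
    (A * A).trace = ∑ i, (hA.eigenvalues i : ℂ) ^ 2 := by
  have h1 : A * A = (hA.eigenvectorUnitary : Matrix (Fin d) (Fin d) ℂ) *
      (diagonal (RCLike.ofReal ∘ hA.eigenvalues) * diagonal (RCLike.ofReal ∘ hA.eigenvalues)) *
      (star (hA.eigenvectorUnitary : Matrix (Fin d) (Fin d) ℂ)) := by
    conv_lhs => rw [hA.spectral_theorem, Unitary.conjStarAlgAut_apply]
    rw [Matrix.mul_assoc, Matrix.mul_assoc, Matrix.mul_assoc, Matrix.mul_assoc]
    congr 1
    rw [← Matrix.mul_assoc (star (hA.eigenvectorUnitary : Matrix (Fin d) (Fin d) ℂ)),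
      (Matrix.mem_unitaryGroup_iff').mp (hA.eigenvectorUnitary).2, Matrix.one_mul,
      Matrix.mul_assoc]
  rw [h1, Matrix.trace_mul_comm, ← Matrix.mul_assoc,
    (Matrix.mem_unitaryGroup_iff').mp (hA.eigenvectorUnitary).2, Matrix.one_mul,
    Matrix.diagonal_mul_diagonal, Matrix.trace_diagonal]
  simp [pow_two]

lemma psd_trace_ofReal {d : ℕ} {X : Matrix (Fin d) (Fin d) ℂ} (hX : X.PosSemidef) :
    X.trace = ((X.trace.re : ℝ) : ℂ) ∧ 0 ≤ X.trace.re := by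
  have h : X.trace = ((∑ i, hX.1.eigenvalues i : ℝ) : ℂ) := by
    rw [trace_eq_sum_eig hX.1]; push_cast; rfl
  have hre : X.trace.re = ∑ i, hX.1.eigenvalues i := by rw [h]; simp
  refine ⟨by rw [hre, ← h], ?_⟩
  rw [hre]
  exact Finset.sum_nonneg fun i _ => hX.eigenvalues_nonneg i

lemma psd_eq_zero_of_trace {d : ℕ} {X : Matrix (Fin d) (Fin d) ℂ} (hX : X.PosSemidef)
    (h : X.trace.re = 0) : X = 0 := by
  have h1 : X.trace = ((∑ i, hX.1.eigenvalues i : ℝ) : ℂ) := by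
    rw [trace_eq_sum_eig hX.1]; push_cast; rfl
  have h2 : ∑ i, hX.1.eigenvalues i = 0 := by
    have := congrArg Complex.re h1; simpa [h] using this.symm
  have h3 : ∀ i ∈ Finset.univ, hX.1.eigenvalues i = 0 :=
    (Finset.sum_eq_zero_iff_of_nonneg fun i _ => hX.eigenvalues_nonneg i).mp h2
  have h4 : hX.1.eigenvalues = 0 := funext fun i => h3 i (Finset.mem_univ i)
  have := hX.1.spectral_theorem
  rw [h4] at this
  have hd : Matrix.diagonal (RCLike.ofReal ∘ (0 : Fin d → ℝ)) = (0 : Matrix (Fin d) (Fin d) ℂ) := by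
    ext i j; by_cases hij : i = j <;> simp [Matrix.diagonal, hij]
  rw [hd, Unitary.conjStarAlgAut_apply, Matrix.mul_zero, Matrix.zero_mul] at this
  exact this

lemma psd_sq_trace_le {d : ℕ} {X : Matrix (Fin d) (Fin d) ℂ} (hX : X.PosSemidef) :
    ((X * X).trace).re ≤ (X.trace.re) ^ 2 := by
  have h1 : (X * X).trace = ((∑ i, (hX.1.eigenvalues i) ^ 2 : ℝ) : ℂ) := by
    rw [sq_trace_eq_sum_eig hX.1]; push_cast; rfl
  have h2 : X.trace.re = ∑ i, hX.1.eigenvalues i := by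
    rw [trace_eq_sum_eig hX.1]; push_cast; simp
  rw [h1, h2, Complex.ofReal_re, sq]
  calc ∑ i, (hX.1.eigenvalues i) ^ 2
      ≤ ∑ i, (hX.1.eigenvalues i) * (∑ j, hX.1.eigenvalues j) := by
        refine Finset.sum_le_sum fun i _ => ?_
        rw [sq]
        exact mul_le_mul_of_nonneg_left
          (Finset.single_le_sum (fun j _ => hX.eigenvalues_nonneg j) (Finset.mem_univ i))
          (hX.eigenvalues_nonneg i)
    _ = (∑ i, hX.1.eigenvalues i) * (∑ j, hX.1.eigenvalues j) := by rw [← Finset.sum_mul]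

lemma psd_smul' {d : ℕ} {K : Matrix (Fin d) (Fin d) ℂ} (hK : K.PosSemidef) {c : ℝ}
    (hc : 0 ≤ c) : ((c : ℂ) • K).PosSemidef := by
  constructor
  · unfold Matrix.IsHermitian
    rw [Matrix.conjTranspose_smul, hK.1]
    simp
  · exact (hK.smul (Complex.zero_le_real.mpr hc)).2

/-- The positive semidefinite square root of a matrix (junk value `0` off the PSD matrices). -/
noncomputable def msqrt {d : ℕ} (A : Matrix (Fin d) (Fin d) ℂ) : Matrix (Fin d) (Fin d) ℂ :=
  if h : A.PosSemidef then
    (h.1.eigenvectorUnitary : Matrix (Fin d) (Fin d) ℂ) *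
      diagonal (((↑) : ℝ → ℂ) ∘ (Real.sqrt ·) ∘ h.1.eigenvalues) *
      (star h.1.eigenvectorUnitary : Matrix (Fin d) (Fin d) ℂ)
  else 0

/-- Fidelity `F(ρ,σ) = Tr √(√ρ·σ·√ρ)` of density matrices. -/
noncomputable def fidelity {d : ℕ} (ρ σ : Matrix (Fin d) (Fin d) ℂ) : ℝ :=
  ((msqrt (msqrt ρ * σ * msqrt ρ)).trace).re

lemma msqrt_spec {d : ℕ} {A : Matrix (Fin d) (Fin d) ℂ} (h : A.PosSemidef) :
    (msqrt A).PosSemidef ∧ msqrt A * msqrt A = A := by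
  have hu : (star h.1.eigenvectorUnitary : Matrix (Fin d) (Fin d) ℂ) *
      (h.1.eigenvectorUnitary : Matrix (Fin d) (Fin d) ℂ) = 1 := by
    simp
  have hD : (diagonal (((↑) : ℝ → ℂ) ∘ (Real.sqrt ·) ∘ h.1.eigenvalues)).PosSemidef :=
    PosSemidef.diagonal (fun i => by
      simp only [Function.comp, Pi.zero_apply]
      exact_mod_cast Real.sqrt_nonneg _)
  rw [msqrt, dif_pos h]
  constructor
  · have := hD.mul_mul_conjTranspose_same (h.1.eigenvectorUnitary : Matrix (Fin d) (Fin d) ℂ)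
    simpa [Matrix.star_eq_conjTranspose] using this
  · calc _ = (h.1.eigenvectorUnitary : Matrix (Fin d) (Fin d) ℂ) *
          diagonal (((↑) : ℝ → ℂ) ∘ (Real.sqrt ·) ∘ h.1.eigenvalues) *
          ((star h.1.eigenvectorUnitary : Matrix (Fin d) (Fin d) ℂ) *
            (h.1.eigenvectorUnitary : Matrix (Fin d) (Fin d) ℂ)) *
          diagonal (((↑) : ℝ → ℂ) ∘ (Real.sqrt ·) ∘ h.1.eigenvalues) *
          (star h.1.eigenvectorUnitary : Matrix (Fin d) (Fin d) ℂ) := by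
            simp only [Matrix.mul_assoc]
      _ = (h.1.eigenvectorUnitary : Matrix (Fin d) (Fin d) ℂ) *
          diagonal (RCLike.ofReal ∘ h.1.eigenvalues) *
          (star h.1.eigenvectorUnitary : Matrix (Fin d) (Fin d) ℂ) := by
            rw [hu, Matrix.mul_one, Matrix.mul_assoc _ (diagonal _) (diagonal _),
              Matrix.diagonal_mul_diagonal]
            congr 3
            ext i
            simp only [Function.comp]
            rw [← Complex.ofReal_mul, Real.mul_self_sqrt (h.eigenvalues_nonneg i)]
            rfl
      _ = A := by
            conv_rhs => rw [h.1.spectral_theorem, Unitary.conjStarAlgAut_apply]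

lemma trace_mul_le_fid_sq {d : ℕ} {ρ σ : Matrix (Fin d) (Fin d) ℂ}
    (hρ : ρ.PosSemidef) (hσ : σ.PosSemidef) :
    ((ρ * σ).trace).re ≤ (fidelity ρ σ) ^ 2 := by
  have hP : (msqrt ρ * σ * msqrt ρ).PosSemidef := by
    have := hσ.mul_mul_conjTranspose_same (msqrt ρ)
    rwa [(msqrt_spec hρ).1.1] at this
  have hfid : fidelity ρ σ = ((msqrt (msqrt ρ * σ * msqrt ρ)).trace).re := rfl
  have htr : (ρ * σ).trace =
      (msqrt (msqrt ρ * σ * msqrt ρ) * msqrt (msqrt ρ * σ * msqrt ρ)).trace := by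
    rw [(msqrt_spec hP).2]
    conv_lhs => rw [← (msqrt_spec hρ).2]
    rw [Matrix.mul_assoc, Matrix.trace_mul_comm, Matrix.mul_assoc]
  rw [htr, hfid]
  exact psd_sq_trace_le (msqrt_spec hP).1

/-- reverse uncertainty relation.  With `K ≠ 0` the uncertainty matrix (sign
chosen so that `s·i·Tr(ρ[A,B]) = -|Tr(ρ[A,B])|`), `λ = Tr K > 0`, and `σ = K/λ` a density
matrix, `ΔA² + ΔB² ≤ |Tr(ρ[A,B])| + λ·F(ρ,σ)²`. -/
theorem stmt6 {d : ℕ} (ρ : Matrix (Fin d) (Fin d) ℂ)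
    (hρ : ρ.PosSemidef) (hρtr : ρ.trace = 1)
    (A B : Matrix (Fin d) (Fin d) ℂ) (hA : A.IsHermitian) (hB : B.IsHermitian)
    (s : ℂ) (hs : s = 1 ∨ s = -1)
    (hsign : s * Complex.I * (ρ * (A * B - B * A)).trace
      = -(‖(ρ * (A * B - B * A)).trace‖ : ℂ))
    (C D K : Matrix (Fin d) (Fin d) ℂ)
    (hC : C = A - (ρ * A).trace • (1 : Matrix (Fin d) (Fin d) ℂ))
    (hD : D = B - (ρ * B).trace • (1 : Matrix (Fin d) (Fin d) ℂ))
    (hK : K = (C - (s * Complex.I) • D) * (C + (s * Complex.I) • D))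
    (hKne : K ≠ 0)
    (lam : ℝ) (hlam : lam = (K.trace).re)
    (σ : Matrix (Fin d) (Fin d) ℂ) (hσ : σ = ((lam : ℂ))⁻¹ • K) :
    0 < lam ∧ σ.PosSemidef ∧ σ.trace = 1 ∧
    ((ρ * (A * A)).trace - (ρ * A).trace ^ 2).re
      + ((ρ * (B * B)).trace - (ρ * B).trace ^ 2).re
    ≤ ‖(ρ * (A * B - B * A)).trace‖ + lam * (fidelity ρ σ) ^ 2 := by
  -- Hermitian-ness of C and D
  have hta : star ((ρ * A).trace) = (ρ * A).trace := by
    rw [← Matrix.trace_conjTranspose, Matrix.conjTranspose_mul, hρ.1, hA, Matrix.trace_mul_comm]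
  have htb : star ((ρ * B).trace) = (ρ * B).trace := by
    rw [← Matrix.trace_conjTranspose, Matrix.conjTranspose_mul, hρ.1, hB, Matrix.trace_mul_comm]
  have hCh : C.IsHermitian := by
    rw [hC]; unfold Matrix.IsHermitian
    rw [Matrix.conjTranspose_sub, Matrix.conjTranspose_smul, Matrix.conjTranspose_one, hA, hta]
  have hDh : D.IsHermitian := by
    rw [hD]; unfold Matrix.IsHermitian
    rw [Matrix.conjTranspose_sub, Matrix.conjTranspose_smul, Matrix.conjTranspose_one, hB, htb]
  -- K is positive semidefinite
  have hMH : (C + (s * Complex.I) • D)ᴴ = C - (s * Complex.I) • D := by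
    rw [Matrix.conjTranspose_add, Matrix.conjTranspose_smul, hCh.eq, hDh.eq]
    have hst : star (s * Complex.I) = -(s * Complex.I) := by
      rcases hs with rfl | rfl <;> simp
    rw [hst, neg_smul, ← sub_eq_add_neg]
  have hKpsd : K.PosSemidef := by
    rw [hK, ← hMH]
    exact Matrix.posSemidef_conjTranspose_mul_self _
  obtain ⟨hKtr, hKtrnn⟩ := psd_trace_ofReal hKpsd
  -- lam is positive
  have hlam0 : 0 < lam := by
    rcases lt_or_eq_of_le hKtrnn with h | h
    · rwa [hlam]
    · exact absurd (psd_eq_zero_of_trace hKpsd h.symm) hKne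
  have hlamne : (lam : ℂ) ≠ 0 := by exact_mod_cast hlam0.ne'
  -- σ is a density matrix
  have hσpsd : σ.PosSemidef := by
    rw [hσ, show ((lam : ℂ))⁻¹ = ((lam⁻¹ : ℝ) : ℂ) by push_cast; ring]
    exact psd_smul' hKpsd (inv_nonneg.mpr hlam0.le)
  have hσtr : σ.trace = 1 := by
    rw [hσ, Matrix.trace_smul, smul_eq_mul, hKtr, ← hlam, inv_mul_cancel₀ hlamne]
  refine ⟨hlam0, hσpsd, hσtr, ?_⟩
  -- the key trace identity
  have key : (ρ * K).trace = ((ρ * (A * A)).trace - (ρ * A).trace ^ 2)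
      + ((ρ * (B * B)).trace - (ρ * B).trace ^ 2)
      + (s * Complex.I) * (ρ * (A * B - B * A)).trace := by
    subst hC hD hK
    rcases hs with rfl | rfl <;>
    · simp only [Matrix.mul_sub, Matrix.sub_mul, Matrix.mul_add, Matrix.add_mul,
        Matrix.smul_mul, Matrix.mul_smul, smul_smul, Matrix.mul_one, Matrix.one_mul,
        Matrix.mul_neg, Matrix.neg_mul, Matrix.trace_neg, neg_smul, smul_neg,
        Matrix.trace_sub, Matrix.trace_add, Matrix.trace_smul, smul_eq_mul, smul_sub, smul_add,
        Matrix.mul_assoc, one_mul, neg_mul, neg_neg, sub_neg_eq_add]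
      rw [hρtr]
      linear_combination (((ρ*B).trace^2 - (ρ*(B*B)).trace)) * Complex.I_mul_I
  rw [hsign] at key
  -- relate Tr(ρK) to Tr(ρσ)
  have hKσ : K = (lam : ℂ) • σ := by
    rw [hσ, smul_smul, mul_inv_cancel₀ hlamne, one_smul]
  have hρK : ((ρ * K).trace).re = lam * ((ρ * σ).trace).re := by
    rw [hKσ, Matrix.mul_smul, Matrix.trace_smul, smul_eq_mul, Complex.re_ofReal_mul]
  -- take real parts of the key identity
  have keyre : ((ρ * (A * A)).trace - (ρ * A).trace ^ 2).re
      + ((ρ * (B * B)).trace - (ρ * B).trace ^ 2).re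
      = lam * ((ρ * σ).trace).re + ‖(ρ * (A * B - B * A)).trace‖ := by
    have := congrArg Complex.re key
    simp only [Complex.add_re, Complex.neg_re, Complex.ofReal_re] at this
    rw [← hρK]
    linarith
  rw [keyre]
  have hfle : ((ρ * σ).trace).re ≤ (fidelity ρ σ) ^ 2 := trace_mul_le_fid_sq hρ hσpsd
  have := mul_le_mul_of_nonneg_left hfle hlam0.le
  linarith
end

section
/- Let ψ ∈ ℂ^d be a unit vector and A, B Hermitian d×d complex matrices. Set C = A − ⟨ψ, Aψ⟩·I, D = B − ⟨ψ, Bψ⟩·I, choose the sign s ∈ {+1, −1} such that s·i·⟨ψ, [A,B]ψ⟩ = −|⟨ψ, [A,B]ψ⟩|, and let K = (C − s·i·D)(C + s·i·D). Then ΔA² + ΔB² ≤ |⟨ψ, [A,B]ψ⟩| + w(K), where w(K) = sup over unit vectors φ ∈ ℂ^d of |⟨φ, Kφ⟩| is the numerical radius of K (which for the positive semidefinite Hermitian K equals its operator norm, i.e., its largest eigenvalue). -/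
open Matrix Complex
open scoped ComplexOrder

/-- reverse uncertainty relation via the numerical radius.  With `K` the
uncertainty matrix for a pure state `ψ` (sign chosen so that
`s·i·⟨ψ,[A,B]ψ⟩ = -|⟨ψ,[A,B]ψ⟩|`), one has `ΔA² + ΔB² ≤ |⟨ψ,[A,B]ψ⟩| + w(K)`, where
`w(K) = sup {|⟨φ,Kφ⟩| : ‖φ‖ = 1}` is the numerical radius of `K`. -/
theorem stmt8 {d : ℕ} (ψ : Fin d → ℂ) (hψ : star ψ ⬝ᵥ ψ = 1)
    (A B : Matrix (Fin d) (Fin d) ℂ) (hA : A.IsHermitian) (hB : B.IsHermitian)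
    (s : ℂ) (hs : s = 1 ∨ s = -1)
    (hsign : s * Complex.I * (star ψ ⬝ᵥ (A * B - B * A).mulVec ψ)
      = -(‖star ψ ⬝ᵥ (A * B - B * A).mulVec ψ‖ : ℂ))
    (C D K : Matrix (Fin d) (Fin d) ℂ)
    (hC : C = A - (star ψ ⬝ᵥ A.mulVec ψ) • (1 : Matrix (Fin d) (Fin d) ℂ))
    (hD : D = B - (star ψ ⬝ᵥ B.mulVec ψ) • (1 : Matrix (Fin d) (Fin d) ℂ))
    (hK : K = (C - (s * Complex.I) • D) * (C + (s * Complex.I) • D)) :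
    (star ψ ⬝ᵥ (A * A).mulVec ψ - (star ψ ⬝ᵥ A.mulVec ψ) ^ 2).re
      + (star ψ ⬝ᵥ (B * B).mulVec ψ - (star ψ ⬝ᵥ B.mulVec ψ) ^ 2).re
    ≤ ‖star ψ ⬝ᵥ (A * B - B * A).mulVec ψ‖
      + sSup {x : ℝ | ∃ φ : Fin d → ℂ, star φ ⬝ᵥ φ = 1 ∧
          x = ‖star φ ⬝ᵥ K.mulVec φ‖} := by
  set a := star ψ ⬝ᵥ A.mulVec ψ with ha
  set b := star ψ ⬝ᵥ B.mulVec ψ with hb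
  set c := star ψ ⬝ᵥ (A * B - B * A).mulVec ψ with hc
  have key : star ψ ⬝ᵥ K.mulVec ψ
      = (star ψ ⬝ᵥ (A*A).mulVec ψ - a ^ 2) + (star ψ ⬝ᵥ (B*B).mulVec ψ - b ^ 2)
        + s * Complex.I * c := by
    subst hK hC hD
    rcases hs with rfl | rfl <;>
    · simp only [hc, ha, hb, Matrix.mul_sub, Matrix.sub_mul, Matrix.mul_add, Matrix.add_mul,
        Matrix.smul_mul, Matrix.mul_smul, smul_smul, Matrix.one_mul, Matrix.mul_one,
        Matrix.sub_mulVec, Matrix.add_mulVec, Matrix.smul_mulVec, Matrix.one_mulVec,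
        dotProduct_sub, dotProduct_add, dotProduct_smul, smul_eq_mul, hψ]
      linear_combination ((star ψ ⬝ᵥ B.mulVec ψ) ^ 2 - star ψ ⬝ᵥ (B * B).mulVec ψ) *
        Complex.I_sq
  have hre : (star ψ ⬝ᵥ K.mulVec ψ).re
      = (star ψ ⬝ᵥ (A*A).mulVec ψ - a ^ 2).re + (star ψ ⬝ᵥ (B*B).mulVec ψ - b ^ 2).re
        - ‖c‖ := by
    rw [key, hsign]
    simp only [Complex.add_re, Complex.sub_re, Complex.neg_re, Complex.ofReal_re]
    ring
  set S := {x : ℝ | ∃ φ : Fin d → ℂ, star φ ⬝ᵥ φ = 1 ∧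
      x = ‖star φ ⬝ᵥ K.mulVec φ‖} with hS
  have hbdd : BddAbove S := by
    refine ⟨∑ i, ∑ j, ‖K i j‖, ?_⟩
    rintro x ⟨φ, hφ, rfl⟩
    have hnorm : ∑ j, Complex.normSq (φ j) = 1 := by
      have h0 : ((∑ j, Complex.normSq (φ j) : ℝ) : ℂ) = 1 := by
        rw [← hφ]
        simp [dotProduct, Complex.normSq_eq_conj_mul_self]
      exact_mod_cast h0
    have hφ1 : ∀ i, ‖φ i‖ ≤ 1 := by
      intro i
      have h1 : Complex.normSq (φ i) ≤ 1 := by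
        rw [← hnorm]
        exact Finset.single_le_sum (fun j _ => Complex.normSq_nonneg _) (Finset.mem_univ i)
      nlinarith [Complex.sq_norm (φ i), norm_nonneg (φ i)]
    calc ‖star φ ⬝ᵥ K.mulVec φ‖
        ≤ ∑ i, ‖(star φ) i * K.mulVec φ i‖ := by
          rw [dotProduct]; exact norm_sum_le _ _
      _ ≤ ∑ i, ∑ j, ‖K i j‖ := by
          apply Finset.sum_le_sum
          intro i _
          rw [norm_mul]
          have h2 : ‖K.mulVec φ i‖ ≤ ∑ j, ‖K i j‖ := by
            calc ‖K.mulVec φ i‖ ≤ ∑ j, ‖K i j * φ j‖ := by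
                  rw [Matrix.mulVec, dotProduct]; exact norm_sum_le _ _
              _ ≤ ∑ j, ‖K i j‖ := by
                  apply Finset.sum_le_sum
                  intro j _
                  rw [norm_mul]
                  calc ‖K i j‖ * ‖φ j‖
                      ≤ ‖K i j‖ * 1 :=
                        mul_le_mul_of_nonneg_left (hφ1 j) (norm_nonneg _)
                    _ = ‖K i j‖ := mul_one _
          have h3 : ‖(star φ) i‖ ≤ 1 := by
            simpa using hφ1 i
          calc ‖(star φ) i‖ * ‖K.mulVec φ i‖
              ≤ 1 * (∑ j, ‖K i j‖) :=
                mul_le_mul h3 h2 (norm_nonneg _) zero_le_one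
            _ = ∑ j, ‖K i j‖ := one_mul _
  have hmem : ‖star ψ ⬝ᵥ K.mulVec ψ‖ ∈ S := ⟨ψ, hψ, rfl⟩
  have hle : (star ψ ⬝ᵥ K.mulVec ψ).re ≤ sSup S :=
    le_trans (Complex.re_le_norm _) (le_csSup hbdd hmem)
  linarith [hre, hle]
end

section
/- Let ρ : ℝ → (d×d complex matrices) be a family of density matrices, differentiable at t, with ρ(0) = ρ₀. Let f(t) = Tr(ρ₀·ρ(t)) (a real number), assume 0 < f(t) < 1, and define the Bures angle L(t) = arccos(√f(t)). Then L is differentiable at t and sin(2·L(t))·L'(t) = −f'(t) = −Tr(ρ₀·ρ'(t)) ≥ S(ρ₀) − ln Tr(exp(ρ'(t))), where exp is the matrix exponential and ρ'(t) is the (Hermitian, traceless) derivative of ρ at t, so that Tr exp(ρ'(t)) is a positive real number. -/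
open Matrix Complex
open scoped ComplexOrder

lemma aux_trace_exp_herm {d : ℕ} {A : Matrix (Fin d) (Fin d) ℂ} (hA : A.IsHermitian) :
    (NormedSpace.exp A).trace = ∑ j, (Real.exp (hA.eigenvalues j) : ℂ) := by
  set U : Matrix (Fin d) (Fin d) ℂ := (hA.eigenvectorUnitary : Matrix (Fin d) (Fin d) ℂ) with hUdef
  have hinv : U⁻¹ = star U :=
    Matrix.inv_eq_left_inv (Matrix.UnitaryGroup.star_mul_self _)
  have hUnit : IsUnit U :=
    ⟨⟨U, star U, Matrix.mem_unitaryGroup_iff.mp hA.eigenvectorUnitary.2,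
      Matrix.UnitaryGroup.star_mul_self _⟩, rfl⟩
  conv_lhs => rw [hA.spectral_theorem, Unitary.conjStarAlgAut_apply, ← hUdef, ← hinv]
  rw [Matrix.exp_conj U (diagonal (RCLike.ofReal ∘ hA.eigenvalues)) hUnit,
    Matrix.trace_mul_cycle, hinv,
    Matrix.UnitaryGroup.star_mul_self, one_mul, Matrix.exp_diagonal, Matrix.trace_diagonal]
  congr 1; funext j
  simp [← Complex.exp_eq_exp_ℂ, ← Complex.ofReal_exp]

lemma aux_trace_herm {d : ℕ} {A : Matrix (Fin d) (Fin d) ℂ} (hA : A.IsHermitian) :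
    A.trace = ∑ j, (hA.eigenvalues j : ℂ) := by
  conv_lhs => rw [hA.spectral_theorem]
  rw [Unitary.conjStarAlgAut_apply, Matrix.trace_mul_cycle, Matrix.UnitaryGroup.star_mul_self, one_mul,
    Matrix.trace_diagonal]
  rfl

lemma aux_gibbs {d : ℕ} [Nonempty (Fin d)] (p h : Fin d → ℝ)
    (hp0 : ∀ i, 0 ≤ p i) (hp1 : ∑ i, p i = 1) :
    -(∑ i, p i * Real.log (p i)) + ∑ i, p i * h i ≤ Real.log (∑ i, Real.exp (h i)) := by
  set Z := ∑ i, Real.exp (h i) with hZdef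
  have hZ : 0 < Z := Finset.sum_pos (fun i _ => Real.exp_pos _) Finset.univ_nonempty
  have key : ∀ i, p i * h i - p i * Real.log (p i) - p i * Real.log Z
      ≤ Real.exp (h i) / Z - p i := by
    intro i
    rcases eq_or_lt_of_le (hp0 i) with h0 | h0
    · rw [← h0]; simp; positivity
    · have hlog := Real.log_le_sub_one_of_pos
        (show 0 < Real.exp (h i) / (Z * p i) by positivity)
      rw [Real.log_div (by positivity) (by positivity), Real.log_exp,
        Real.log_mul (ne_of_gt hZ) (ne_of_gt h0)] at hlog
      have := mul_le_mul_of_nonneg_left hlog (hp0 i)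
      calc p i * h i - p i * Real.log (p i) - p i * Real.log Z
          = p i * (h i - (Real.log Z + Real.log (p i))) := by ring
        _ ≤ p i * (Real.exp (h i) / (Z * p i) - 1) := this
        _ = Real.exp (h i) / Z - p i := by field_simp
  have hsum := Finset.sum_le_sum (fun i (_ : i ∈ Finset.univ) => key i)
  rw [Finset.sum_sub_distrib, Finset.sum_sub_distrib, Finset.sum_sub_distrib,
    ← Finset.sum_mul, hp1] at hsum
  have hZZ : ∑ i, Real.exp (h i) / Z = 1 := by
    rw [← Finset.sum_div, ← hZdef, div_self (ne_of_gt hZ)]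
  linarith

lemma aux_jensen_exp {d : ℕ} (w q : Fin d → ℝ) (hw0 : ∀ j, 0 ≤ w j)
    (hw1 : ∑ j, w j = 1) :
    Real.exp (∑ j, w j * q j) ≤ ∑ j, w j * Real.exp (q j) := by
  have := convexOn_exp.map_sum_le (t := Finset.univ) (w := w) (p := q)
    (fun j _ => hw0 j) hw1 (fun j _ => Set.mem_univ _)
  simpa [smul_eq_mul] using this

/-- reverse-speed-limit differential inequality.  For a differentiable family of
density matrices `ρ(t)` with `ρ(0) = ρ₀`, `f(t) = Tr(ρ₀ ρ(t)) ∈ (0,1)`, and Bures angle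
`L(t) = arccos √f(t)`, the function `L` is differentiable at `t` with
`sin(2L(t))·L'(t) = -f'(t) = -Tr(ρ₀ ρ'(t)) ≥ S(ρ₀) - ln Tr(exp(ρ'(t)))`. -/
theorem stmt9 {d : ℕ} (ρfam : ℝ → Matrix (Fin d) (Fin d) ℂ)
    (ρ₀ ρ' : Matrix (Fin d) (Fin d) ℂ)
    (hdens : ∀ u : ℝ, (ρfam u).PosSemidef ∧ (ρfam u).trace = 1)
    (hρ₀ : ρ₀.PosSemidef) (h0 : ρfam 0 = ρ₀)
    (t : ℝ)
    (hderiv : ∀ i j : Fin d, HasDerivAt (fun u => ρfam u i j) (ρ' i j) t)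
    (f : ℝ → ℝ) (hf : f = fun u => ((ρ₀ * ρfam u).trace).re)
    (hf0 : 0 < f t) (hf1 : f t < 1)
    (L : ℝ → ℝ) (hL : L = fun u => Real.arccos (Real.sqrt (f u))) :
    ρ'.IsHermitian ∧ ρ'.trace = 0 ∧ 0 < ((NormedSpace.exp ρ').trace).re ∧
    HasDerivAt f (((ρ₀ * ρ').trace).re) t ∧
    ∃ L' : ℝ, HasDerivAt L L' t ∧
      Real.sin (2 * L t) * L' = -(((ρ₀ * ρ').trace).re) ∧
      (-(∑ i, (hρ₀.1.eigenvalues i) * Real.log (hρ₀.1.eigenvalues i)))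
          - Real.log (((NormedSpace.exp ρ').trace).re)
        ≤ -(((ρ₀ * ρ').trace).re) := by
  -- nonemptiness
  have hd0 : d ≠ 0 := by
    intro hd
    subst hd
    have := (hdens 0).2
    simp [Matrix.trace] at this
  have hne : Nonempty (Fin d) := ⟨⟨0, Nat.pos_of_ne_zero hd0⟩⟩
  -- Hermitian
  have hherm : ρ'.IsHermitian := by
    ext i j
    rw [Matrix.conjTranspose_apply]
    have h1 : HasDerivAt (fun u => ρfam u i j) (star (ρ' j i)) t := by
      have h2 := (hderiv j i).star
      have h3 : (fun u => star (ρfam u j i)) = (fun u => ρfam u i j) := by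
        funext u
        have := (hdens u).1.1
        conv_rhs => rw [← this]
        rw [Matrix.conjTranspose_apply]
      rwa [h3] at h2
    exact ((hderiv i j).unique h1).symm
  -- trace zero
  have htr : ρ'.trace = 0 := by
    have hsum : HasDerivAt (fun u => ∑ i, ρfam u i i) (∑ i, ρ' i i) t :=
      HasDerivAt.fun_sum (fun i _ => hderiv i i)
    have hconst : (fun u : ℝ => ∑ i, ρfam u i i) = fun _ => (1 : ℂ) := by
      funext u
      have := (hdens u).2
      rwa [Matrix.trace] at this
    rw [hconst] at hsum
    have := hsum.unique (hasDerivAt_const t 1)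
    rw [Matrix.trace]
    simpa using this
  -- derivative of f
  have hfd : HasDerivAt f (((ρ₀ * ρ').trace).re) t := by
    have h1 : HasDerivAt (fun u => (ρ₀ * ρfam u).trace) ((ρ₀ * ρ').trace) t := by
      simp only [Matrix.trace, Matrix.diag, Matrix.mul_apply]
      exact HasDerivAt.fun_sum fun i _ => HasDerivAt.fun_sum fun j _ => (hderiv j i).const_mul (ρ₀ i j)
    rw [hf]
    exact Complex.reCLM.hasFDerivAt.comp_hasDerivAt t h1
  -- positivity of trace exp
  have hexp : ((NormedSpace.exp ρ').trace).re = ∑ j, Real.exp (hherm.eigenvalues j) := by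
    rw [aux_trace_exp_herm hherm]
    push_cast
    norm_cast
  have hpos : 0 < ((NormedSpace.exp ρ').trace).re := by
    rw [hexp]
    exact Finset.sum_pos (fun j _ => Real.exp_pos _) Finset.univ_nonempty
  refine ⟨hherm, htr, hpos, hfd, ?_⟩
  -- L derivative
  set T : ℝ := ((ρ₀ * ρ').trace).re with hT
  set x := Real.sqrt (f t) with hx
  have hx0 : 0 < x := Real.sqrt_pos.2 hf0
  have hx1 : x < 1 := by
    have : x < Real.sqrt 1 := Real.sqrt_lt_sqrt hf0.le hf1
    simpa using this
  have hxx : x ^ 2 = f t := Real.sq_sqrt hf0.le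
  have h1x : 0 < 1 - x ^ 2 := by rw [hxx]; linarith
  have hs : HasDerivAt (fun u => Real.sqrt (f u)) (1 / (2 * x) * T) t :=
    (Real.hasDerivAt_sqrt (ne_of_gt hf0)).comp t hfd
  have ha : HasDerivAt Real.arccos (-(1 / Real.sqrt (1 - x ^ 2))) x :=
    Real.hasDerivAt_arccos (by linarith) (ne_of_lt hx1)
  have hLd : HasDerivAt L (-(1 / Real.sqrt (1 - x ^ 2)) * (1 / (2 * x) * T)) t := by
    rw [hL]
    have := ha.comp t hs; exact this
  refine ⟨_, hLd, ?_, ?_⟩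
  · -- sin(2L)·L' = -T
    have hLt : L t = Real.arccos x := by rw [hL]
    rw [hLt, Real.sin_two_mul, Real.sin_arccos, Real.cos_arccos (by linarith) hx1.le]
    have hsq : Real.sqrt (1 - x ^ 2) > 0 := Real.sqrt_pos.2 h1x
    field_simp
  · -- the entropy inequality
    set p : Fin d → ℝ := hρ₀.1.eigenvalues with hp
    set q : Fin d → ℝ := hherm.eigenvalues with hq
    set V : Matrix (Fin d) (Fin d) ℂ := (hρ₀.1.eigenvectorUnitary : Matrix (Fin d) (Fin d) ℂ)
      with hV
    set U : Matrix (Fin d) (Fin d) ℂ := (hherm.eigenvectorUnitary : Matrix (Fin d) (Fin d) ℂ)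
      with hU
    set W : Matrix (Fin d) (Fin d) ℂ := star V * U with hW
    have hVV : V * star V = 1 := Matrix.mem_unitaryGroup_iff.mp hρ₀.1.eigenvectorUnitary.2
    have hVV' : star V * V = 1 := Matrix.UnitaryGroup.star_mul_self _
    have hUU : U * star U = 1 := Matrix.mem_unitaryGroup_iff.mp hherm.eigenvectorUnitary.2
    have hUU' : star U * U = 1 := Matrix.UnitaryGroup.star_mul_self _
    have hWW : W * star W = 1 := by
      rw [hW, StarMul.star_mul, star_star, Matrix.mul_assoc, ← Matrix.mul_assoc U,
        hUU, Matrix.one_mul, hVV']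
    have hWW' : star W * W = 1 := by
      rw [hW, StarMul.star_mul, star_star, Matrix.mul_assoc, ← Matrix.mul_assoc V,
        hVV, Matrix.one_mul, hUU']
    -- row sums of |W|²
    have hrow : ∀ i, ∑ j, Complex.normSq (W i j) = 1 := by
      intro i
      have h1 : (W * star W) i i = (1 : Matrix (Fin d) (Fin d) ℂ) i i := by rw [hWW]
      rw [Matrix.mul_apply] at h1
      simp only [Matrix.star_apply, Matrix.one_apply_eq] at h1
      have h2 : ∑ j, ((Complex.normSq (W i j) : ℂ)) = 1 := by
        rw [← h1]
        refine Finset.sum_congr rfl fun j _ => ?_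
        rw [← Complex.mul_conj]
        rfl
      exact_mod_cast h2
    have hcol : ∀ j, ∑ i, Complex.normSq (W i j) = 1 := by
      intro j
      have h1 : (star W * W) j j = (1 : Matrix (Fin d) (Fin d) ℂ) j j := by rw [hWW']
      rw [Matrix.mul_apply] at h1
      simp only [Matrix.star_apply, Matrix.one_apply_eq] at h1
      have h2 : ∑ i, ((Complex.normSq (W i j) : ℂ)) = 1 := by
        rw [← h1]
        refine Finset.sum_congr rfl fun i _ => ?_
        rw [mul_comm, ← Complex.mul_conj]
        rfl
      exact_mod_cast h2
    have hp0 : ∀ i, 0 ≤ p i := fun i => hρ₀.eigenvalues_nonneg i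
    have hp1 : ∑ i, p i = 1 := by
      have h1 : ρ₀.trace = ∑ i, (p i : ℂ) := aux_trace_herm hρ₀.1
      have h2 : ρ₀.trace = 1 := by rw [← h0]; exact (hdens 0).2
      rw [h2] at h1
      exact_mod_cast h1.symm
    set h : Fin d → ℝ := fun i => ∑ j, Complex.normSq (W i j) * q j with hh
    -- trace formula
    have htrace : T = ∑ i, p i * h i := by
      have hsA : ρ₀ = V * diagonal (RCLike.ofReal ∘ p) * star V := hρ₀.1.spectral_theorem
      have hsB : ρ' = U * diagonal (RCLike.ofReal ∘ q) * star U := hherm.spectral_theorem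
      have key : ρ₀ * ρ' = V * (diagonal (RCLike.ofReal ∘ p) * W *
          diagonal (RCLike.ofReal ∘ q) * star W) * star V := by
        rw [hsA, hsB, hW, StarMul.star_mul, star_star]
        simp only [Matrix.mul_assoc]
        rw [hVV, Matrix.mul_one]
      have htr2 : (ρ₀ * ρ').trace
          = (diagonal (RCLike.ofReal ∘ p) * W * diagonal (RCLike.ofReal ∘ q) * star W).trace := by
        rw [key, Matrix.trace_mul_cycle, ← Matrix.mul_assoc, hVV', Matrix.one_mul]
      have hcompute : (diagonal (RCLike.ofReal ∘ p) * W * diagonal (RCLike.ofReal ∘ q)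
          * star W).trace = ∑ i, (p i : ℂ) * ∑ j, (Complex.normSq (W i j) : ℂ) * (q j : ℂ) := by
        rw [Matrix.trace]
        refine Finset.sum_congr rfl fun i _ => ?_
        rw [Matrix.diag_apply, Matrix.mul_apply, Finset.mul_sum]
        refine Finset.sum_congr rfl fun j _ => ?_
        simp only [Matrix.mul_diagonal, Matrix.diagonal_mul, Matrix.star_apply,
          Function.comp_apply, RCLike.star_def]
        rw [← Complex.mul_conj]
        simp only [show (RCLike.ofReal : ℝ → ℂ) = Complex.ofReal from by norm_cast]
        ring
      have hcast : (∑ i, (p i : ℂ) * ∑ j, (Complex.normSq (W i j) : ℂ) * (q j : ℂ))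
          = ((∑ i, p i * ∑ j, Complex.normSq (W i j) * q j : ℝ) : ℂ) := by
        push_cast
        rfl
      rw [hT, htr2, hcompute, hcast, Complex.ofReal_re, hh]
    -- Gibbs + Jensen
    have hg := aux_gibbs p h hp0 hp1
    have hexph : 0 < ∑ i, Real.exp (h i) :=
      Finset.sum_pos (fun i _ => Real.exp_pos _) Finset.univ_nonempty
    have hj : ∑ i, Real.exp (h i) ≤ ∑ j, Real.exp (q j) := by
      calc ∑ i, Real.exp (h i)
          ≤ ∑ i, ∑ j, Complex.normSq (W i j) * Real.exp (q j) :=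
            Finset.sum_le_sum fun i _ => aux_jensen_exp (fun j => Complex.normSq (W i j)) q
              (fun j => Complex.normSq_nonneg _) (hrow i)
        _ = ∑ j, (∑ i, Complex.normSq (W i j)) * Real.exp (q j) := by
            rw [Finset.sum_comm]
            exact Finset.sum_congr rfl fun j _ => (Finset.sum_mul _ _ _).symm
        _ = ∑ j, Real.exp (q j) := by
            refine Finset.sum_congr rfl fun j _ => ?_
            rw [hcol j, one_mul]
    have hlog : Real.log (∑ i, Real.exp (h i)) ≤ Real.log (∑ j, Real.exp (q j)) :=
      Real.log_le_log hexph hj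
    rw [hexp]
    linarith
end

section
/- Let n₁, n₂ ∈ ℝ³ be unit vectors and take the maximally mixed qubit state ρ = I/2 (i.e., r = 0). With A = n₁·σ, B = n₂·σ, C = A − Tr(ρA)·I = A, D = B − Tr(ρB)·I = B, and K = (C + iD)(C − iD), the Bloch vector b of the normalized uncertainty matrix, defined by K/Tr(K) = (I + b·σ)/2, satisfies ‖b‖ = √(1 − (n₁·n₂)²). -/
open Matrix Complex

/-- The Pauli matrix σx. -/
def sigmaX : Matrix (Fin 2) (Fin 2) ℂ := !![0, 1; 1, 0]

/-- The Pauli matrix σy. -/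
def sigmaY : Matrix (Fin 2) (Fin 2) ℂ := !![0, -Complex.I; Complex.I, 0]

/-- The Pauli matrix σz. -/
def sigmaZ : Matrix (Fin 2) (Fin 2) ℂ := !![1, 0; 0, -1]

/-- `v·σ = v₁σx + v₂σy + v₃σz` for `v ∈ ℝ³`. -/
noncomputable def pauliVec (v : Fin 3 → ℝ) : Matrix (Fin 2) (Fin 2) ℂ :=
  (v 0 : ℂ) • sigmaX + (v 1 : ℂ) • sigmaY + (v 2 : ℂ) • sigmaZ

lemma trace_pauliVec (v : Fin 3 → ℝ) : (pauliVec v).trace = 0 := by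
  simp [pauliVec, sigmaX, sigmaY, sigmaZ, Matrix.trace_fin_two]

lemma trace_pauliVec_mul (v w : Fin 3 → ℝ) :
    ((pauliVec v) * (pauliVec w)).trace = 2 * ((v ⬝ᵥ w : ℝ) : ℂ) := by
  simp [pauliVec, sigmaX, sigmaY, sigmaZ, Matrix.trace_fin_two, Matrix.mul_fin_two,
    dotProduct, Fin.sum_univ_three]
  ring_nf
  simp [Complex.ext_iff]

/-- for the maximally mixed state `ρ = I/2` and `A = n₁·σ`, `B = n₂·σ`
(so `C = A`, `D = B`), the Bloch vector `b` of the normalized uncertainty matrix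
`K/Tr(K) = (I + b·σ)/2`, where `K = (C + iD)(C - iD)`, has length `√(1 - (n₁·n₂)²)`. -/
theorem stmt14 (n₁ n₂ : Fin 3 → ℝ) (hn₁ : n₁ ⬝ᵥ n₁ = 1) (hn₂ : n₂ ⬝ᵥ n₂ = 1)
    (ρ : Matrix (Fin 2) (Fin 2) ℂ)
    (hρ : ρ = (1 / 2 : ℂ) • (1 : Matrix (Fin 2) (Fin 2) ℂ))
    (A B : Matrix (Fin 2) (Fin 2) ℂ) (hA : A = pauliVec n₁) (hB : B = pauliVec n₂)
    (C D K : Matrix (Fin 2) (Fin 2) ℂ)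
    (hC : C = A - (ρ * A).trace • (1 : Matrix (Fin 2) (Fin 2) ℂ))
    (hD : D = B - (ρ * B).trace • (1 : Matrix (Fin 2) (Fin 2) ℂ))
    (hK : K = (C + Complex.I • D) * (C - Complex.I • D))
    (b : Fin 3 → ℝ)
    (hb : (K.trace)⁻¹ • K
      = (1 / 2 : ℂ) • ((1 : Matrix (Fin 2) (Fin 2) ℂ) + pauliVec b)) :
    C = A ∧ D = B ∧
    Real.sqrt (b ⬝ᵥ b) = Real.sqrt (1 - (n₁ ⬝ᵥ n₂) ^ 2) := by
  have hCA : C = A := by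
    rw [hC, hρ, hA]
    simp [Matrix.smul_mul, trace_pauliVec]
  have hDB : D = B := by
    rw [hD, hρ, hB]
    simp [Matrix.smul_mul, trace_pauliVec]
  refine ⟨hCA, hDB, ?_⟩
  -- trace of K is 4
  have htrK : K.trace = 4 := by
    rw [hK, hCA, hDB, hA, hB]
    simp only [add_mul, mul_sub, Matrix.smul_mul, Matrix.mul_smul, Matrix.trace_add,
      Matrix.trace_sub, Matrix.trace_smul, smul_smul, trace_pauliVec_mul,
      dotProduct_comm n₂ n₁, hn₁, hn₂, smul_eq_mul]
    push_cast
    ring_nf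
    simp [Complex.ext_iff]
    norm_num
  have hK4 : K = (2 : ℂ) • ((1 : Matrix (Fin 2) (Fin 2) ℂ) + pauliVec b) := by
    rw [htrK] at hb
    calc K = (4 : ℂ) • ((4 : ℂ)⁻¹ • K) := by rw [smul_smul]; norm_num
    _ = (4 : ℂ) • ((1 / 2 : ℂ) • ((1 : Matrix (Fin 2) (Fin 2) ℂ) + pauliVec b)) := by rw [hb]
    _ = (2 : ℂ) • ((1 : Matrix (Fin 2) (Fin 2) ℂ) + pauliVec b) := by
        rw [smul_smul]; norm_num
  have E : (pauliVec n₁ + Complex.I • pauliVec n₂) * (pauliVec n₁ - Complex.I • pauliVec n₂)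
      = (2 : ℂ) • ((1 : Matrix (Fin 2) (Fin 2) ℂ) + pauliVec b) := by
    rw [← hA, ← hB, ← hCA, ← hDB, ← hK, hK4]
  have e00 := congrFun (congrFun E 0) 0
  have e01 := congrFun (congrFun E 0) 1
  have e10 := congrFun (congrFun E 1) 0
  simp [pauliVec, sigmaX, sigmaY, sigmaZ, Matrix.mul_apply, Fin.sum_univ_succ,
    Matrix.one_apply, Complex.ext_iff] at e00 e01 e10
  obtain ⟨e00r, e00i⟩ := e00
  obtain ⟨e01r, e01i⟩ := e01
  obtain ⟨e10r, e10i⟩ := e10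
  have hn₁' := hn₁
  have hn₂' := hn₂
  simp only [dotProduct, Fin.sum_univ_three] at hn₁' hn₂'
  have hb0 : b 0 = n₁ 1 * n₂ 2 - n₁ 2 * n₂ 1 := by linarith
  have hb1 : b 1 = n₁ 2 * n₂ 0 - n₁ 0 * n₂ 2 := by linarith
  have hb2 : b 2 = n₁ 0 * n₂ 1 - n₁ 1 * n₂ 0 := by
    linear_combination (hn₁' + hn₂' - e00r) / 2
  simp only [dotProduct, Fin.sum_univ_three] at hn₁ hn₂ ⊢
  rw [hb0, hb1, hb2]
  congr 1
  linear_combination (n₁ 0 ^ 2 + n₁ 1 ^ 2 + n₁ 2 ^ 2) * hn₂ + hn₁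
end

section
/- Let ρ be a density matrix on ℂ^d and A, B, C Hermitian d×d complex matrices. Then ΔA² + ΔB² + ΔC² ≥ (1/2)·(|Tr(ρ[A,B])| + |Tr(ρ[B,C])| + |Tr(ρ[A,C])|), where each trace of a commutator is purely imaginary and |·| is the complex modulus. -/
open Matrix Complex
open scoped ComplexOrder

private noncomputable def emb {d : ℕ} (M : Matrix (Fin d) (Fin d) ℂ) :
    EuclideanSpace ℂ (Fin d × Fin d) := WithLp.toLp 2 (fun p : Fin d × Fin d => M p.1 p.2)

private lemma trace_ct_mul_eq_inner {d : ℕ} (M N : Matrix (Fin d) (Fin d) ℂ) :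
    (Mᴴ * N).trace = inner (𝕜 := ℂ) (emb M) (emb N) := by
  rw [PiLp.inner_apply]
  simp only [RCLike.inner_apply', emb, PiLp.toLp_apply]
  rw [Fintype.sum_prod_type]
  simp only [Matrix.trace, Matrix.diag, Matrix.mul_apply, Matrix.conjTranspose_apply]
  rw [Finset.sum_comm]
  rfl

private lemma cs_half {d : ℕ} (M N : Matrix (Fin d) (Fin d) ℂ) :
    2 * ‖(Mᴴ * N).trace‖ ≤ ((Mᴴ * M).trace).re + ((Nᴴ * N).trace).re := by
  have h1 : ‖(Mᴴ * N).trace‖ ≤ ‖emb M‖ * ‖emb N‖ := by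
    rw [trace_ct_mul_eq_inner]
    exact norm_inner_le_norm _ _
  have h2 : ((Mᴴ * M).trace).re = ‖emb M‖ ^ 2 := by
    rw [trace_ct_mul_eq_inner]
    exact inner_self_eq_norm_sq (𝕜 := ℂ) _
  have h3 : ((Nᴴ * N).trace).re = ‖emb N‖ ^ 2 := by
    rw [trace_ct_mul_eq_inner]
    exact inner_self_eq_norm_sq (𝕜 := ℂ) _
  nlinarith [sq_nonneg (‖emb M‖ - ‖emb N‖)]

open scoped MatrixOrder in
private lemma pair {d : ℕ} (ρ : Matrix (Fin d) (Fin d) ℂ)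
    (hρ : ρ.PosSemidef) (hρtr : ρ.trace = 1)
    (A B : Matrix (Fin d) (Fin d) ℂ)
    (hA : A.IsHermitian) (hB : B.IsHermitian) :
    ‖(ρ * (A * B - B * A)).trace‖
      ≤ ((ρ * (A * A)).trace - (ρ * A).trace ^ 2).re
        + ((ρ * (B * B)).trace - (ρ * B).trace ^ 2).re := by
  set s := CFC.sqrt ρ with hs_def
  have hs : s.IsHermitian := (CFC.sqrt_nonneg ρ).isSelfAdjoint
  have hss : s * s = ρ := CFC.sqrt_mul_sqrt_self ρ hρ.nonneg
  set t := (ρ * A).trace with ht_def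
  set u := (ρ * B).trace with hu_def
  have htr : ∀ (X : Matrix (Fin d) (Fin d) ℂ), X.IsHermitian →
      star ((ρ * X).trace) = (ρ * X).trace := by
    intro X hX
    rw [← Matrix.trace_conjTranspose, Matrix.conjTranspose_mul, hX, hρ.1,
      Matrix.trace_mul_comm]
  have ht : star t = t := htr A hA
  have hu : star u = u := htr B hB
  set A' := A - t • 1 with hA'_def
  set B' := B - u • 1 with hB'_def
  have hA' : A'.IsHermitian := by
    unfold Matrix.IsHermitian
    rw [hA'_def, Matrix.conjTranspose_sub, hA, Matrix.conjTranspose_smul,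
      Matrix.conjTranspose_one, ht]
  have hB' : B'.IsHermitian := by
    unfold Matrix.IsHermitian
    rw [hB'_def, Matrix.conjTranspose_sub, hB, Matrix.conjTranspose_smul,
      Matrix.conjTranspose_one, hu]
  -- key trace identity
  have key : ∀ (X Y : Matrix (Fin d) (Fin d) ℂ), X.IsHermitian →
      ((X * s)ᴴ * (Y * s)).trace = (ρ * (X * Y)).trace := by
    intro X Y hX
    rw [Matrix.conjTranspose_mul, hs, hX]
    rw [show s * X * (Y * s) = s * (X * Y * s) by noncomm_ring]
    rw [Matrix.trace_mul_comm, Matrix.mul_assoc, hss, ← Matrix.mul_assoc, Matrix.trace_mul_comm,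
      Matrix.mul_assoc]
  -- variance expansion
  have var : ∀ (X : Matrix (Fin d) (Fin d) ℂ) (c : ℂ), c = (ρ * X).trace →
      (ρ * ((X - c • 1) * (X - c • 1))).trace = (ρ * (X * X)).trace - c ^ 2 := by
    intro X c hc
    have : (X - c • 1) * (X - c • 1) = X * X - (2 * c) • X + (c ^ 2) • 1 := by
      simp only [Matrix.sub_mul, Matrix.mul_sub, Matrix.smul_mul, Matrix.mul_smul,
        Matrix.mul_one, Matrix.one_mul, smul_smul]
      module
    rw [this]
    simp only [Matrix.mul_add, Matrix.mul_sub, Matrix.trace_add, Matrix.trace_sub,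
      Matrix.mul_smul, Matrix.trace_smul, Matrix.mul_one, hρtr, ← hc, smul_eq_mul]
    ring
  -- commutator invariance
  have comm : A' * B' - B' * A' = A * B - B * A := by
    rw [hA'_def, hB'_def]
    simp only [Matrix.sub_mul, Matrix.mul_sub, Matrix.smul_mul, Matrix.mul_smul,
      Matrix.mul_one, Matrix.one_mul, smul_smul]
    module
  -- conjugate relation
  have hconj : (ρ * (B' * A')).trace = star ((ρ * (A' * B')).trace) := by
    rw [← Matrix.trace_conjTranspose, Matrix.conjTranspose_mul, Matrix.conjTranspose_mul,
      hA', hB', hρ.1, Matrix.trace_mul_comm, Matrix.mul_assoc]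
  have habs : ‖(ρ * (A * B - B * A)).trace‖
      ≤ 2 * ‖(ρ * (A' * B')).trace‖ := by
    rw [← comm, Matrix.mul_sub, Matrix.trace_sub, hconj]
    calc ‖(ρ * (A' * B')).trace - star ((ρ * (A' * B')).trace)‖
        ≤ ‖(ρ * (A' * B')).trace‖ + ‖star ((ρ * (A' * B')).trace)‖ := norm_sub_le _ _
      _ = 2 * ‖(ρ * (A' * B')).trace‖ := by rw [norm_star]; ring
  have hcs := cs_half (A' * s) (B' * s)
  rw [key A' B' hA', key A' A' hA', key B' B' hB'] at hcs
  rw [var A t rfl, var B u rfl] at hcs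
  linarith

/-- three-observable sum uncertainty relation: for a density matrix `ρ` and
Hermitian `A B C`, `ΔA² + ΔB² + ΔC² ≥ (1/2)(|Tr(ρ[A,B])| + |Tr(ρ[B,C])| + |Tr(ρ[A,C])|)`. -/
theorem stmt16 {d : ℕ} (ρ : Matrix (Fin d) (Fin d) ℂ)
    (hρ : ρ.PosSemidef) (hρtr : ρ.trace = 1)
    (A B C : Matrix (Fin d) (Fin d) ℂ)
    (hA : A.IsHermitian) (hB : B.IsHermitian) (hC : C.IsHermitian) :
    ((ρ * (A * A)).trace - (ρ * A).trace ^ 2).re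
      + ((ρ * (B * B)).trace - (ρ * B).trace ^ 2).re
      + ((ρ * (C * C)).trace - (ρ * C).trace ^ 2).re
    ≥ (1 / 2) * (‖(ρ * (A * B - B * A)).trace‖
        + ‖(ρ * (B * C - C * B)).trace‖
        + ‖(ρ * (A * C - C * A)).trace‖) := by
  have h1 := pair ρ hρ hρtr A B hA hB
  have h2 := pair ρ hρ hρtr B C hB hC
  have h3 := pair ρ hρ hρtr A C hA hC
  linarith
end
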